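/- arXiv:1408.4085 — 3 statements merged into one kernel-verified Lean document; each statement's English description precedes it below -/
import Mathlib

section
/- If ς is the minimal length representative of a right coset W_I ς in a Coxeter group W, then for every w ∈ W_I the map v ↦ vς is an order isomorphism from the Bruhat interval [e, w] in W_I onto the Bruhat interval [ς, wς] in W. -/
open CoxeterSystem

variable {B W : Type*} [Group W] {M : CoxeterMatrix B}

/-- The Bruhat order on a Coxeter group: `u ≤ w` iff `w` is obtained from `u` by
repeatedly multiplying on the right by reflections that increase length. -/
def bruhatLE (cs : CoxeterSystem M W) (u w : W) : Prop :=
  Relation.ReflTransGen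
    (fun a b => cs.length a < cs.length b ∧ ∃ t, cs.IsReflection t ∧ b = a * t) u w

/-- The standard parabolic subgroup generated by the simple reflections indexed by `I`. -/
def parabolic (cs : CoxeterSystem M W) (I : Set B) : Subgroup W :=
  Subgroup.closure (cs.simple '' I)

/-- `ς` is a minimal length representative of its right coset `W_I ς`. -/
def IsMinCosetRep (cs : CoxeterSystem M W) (I : Set B) (ς : W) : Prop :=
  ∀ u ∈ parabolic cs I, cs.length ς ≤ cs.length (u * ς)

namespace BruhatAux

variable [DecidableEq W] (cs : CoxeterSystem M W)

local prefix:100 "σ" => cs.simple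
local prefix:100 "π" => cs.wordProd
local prefix:100 "ℓ" => cs.length

/-- Indicator function with values in `ZMod 2`. -/
def χ (x y : W) : ZMod 2 := if x = y then 1 else 0

lemma χ_conj (c x y : W) : χ (c * x * c⁻¹) y = χ x (c⁻¹ * y * c) := by
  unfold χ
  congr 1
  simp only [eq_iff_iff]
  constructor
  · rintro rfl; group
  · rintro rfl; group

/-- The basic involution of the permutation representation used to prove
the strong exchange property. -/
def eta (i : B) : W × ZMod 2 → W × ZMod 2 :=
  fun p => (σ i * p.1 * σ i, p.2 + χ p.1 (σ i))

lemma eta_involutive (i : B) : Function.Involutive (eta cs i) := by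
  intro p
  unfold eta χ
  have h : σ i * (σ i * p.1 * σ i) * σ i = p.1 := by
    simp [← mul_assoc, cs.simple_mul_simple_self, cs.simple_mul_simple_cancel_right]
  simp only [h]
  have h2 : (σ i * p.1 * σ i = σ i) ↔ (p.1 = σ i) := by
    constructor
    · intro hh
      have := congrArg (fun z => σ i * z * σ i) hh
      simpa [← mul_assoc, cs.simple_mul_simple_self, cs.simple_mul_simple_cancel_right,
        cs.simple_mul_simple_cancel_left] using this
    · intro hh; rw [hh]; simp [cs.simple_mul_simple_self]
  rw [if_congr h2 rfl rfl]
  refine Prod.ext rfl ?_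
  show p.2 + (if p.1 = σ i then 1 else 0) + (if p.1 = σ i then 1 else 0) = p.2
  rcases em (p.1 = σ i) with h3 | h3
  · simp only [if_pos h3]
    rw [add_assoc, show (1 : ZMod 2) + 1 = 0 by decide, add_zero]
  · simp only [if_neg h3]
    rw [add_zero, add_zero]
/-- The permutation from `eta`. -/
def etaPerm (i : B) : Equiv.Perm (W × ZMod 2) := (eta_involutive cs i).toPerm

lemma etaPerm_apply (i : B) (p : W × ZMod 2) :
    etaPerm cs i p = (σ i * p.1 * σ i, p.2 + χ p.1 (σ i)) := rfl

lemma etaPerm_liftable : M.IsLiftable (etaPerm cs) := by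
  intro i j
  set m := M i j with hm
  set p := σ i * σ j with hpdef
  have hp : p ^ m = 1 := cs.simple_mul_simple_pow i j
  have hsi : σ i * σ i = 1 := cs.simple_mul_simple_self i
  have hsj : σ j * σ j = 1 := cs.simple_mul_simple_self j
  have hji : σ j = σ i * p := by rw [hpdef, ← mul_assoc, hsi, one_mul]
  have H1 : σ i * p * σ i = p⁻¹ := by
    rw [hpdef]; rw [show σ i * (σ i * σ j) * σ i = (σ i * σ i) * (σ j * σ i) by group,
      hsi, one_mul, mul_inv_rev, cs.inv_simple, cs.inv_simple]
  have H2 : ∀ k, σ i * p ^ k * σ i = p⁻¹ ^ k := by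
    intro k
    induction k with
    | zero => simpa using hsi
    | succ k ih =>
      rw [pow_succ, pow_succ, ← ih, ← H1]
      rw [show σ i * (p ^ k * p) * σ i = (σ i * p ^ k * σ i) * (σ i * p * σ i) by
        simp [mul_assoc, hsi]]
  have H2' : ∀ k, σ i * p⁻¹ ^ k * σ i = p ^ k := by
    intro k
    rw [← H2 k]
    rw [show σ i * (σ i * p ^ k * σ i) * σ i = (σ i * σ i) * p ^ k * (σ i * σ i) by group,
      hsi, one_mul, mul_one]
  have Id1 : ∀ k, p⁻¹ ^ k * σ j * p ^ k = σ i * p ^ (2 * k + 1) := by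
    intro k
    rw [hji]
    calc p⁻¹ ^ k * (σ i * p) * p ^ k = (p⁻¹ ^ k * σ i) * p ^ (k + 1) := by
          rw [pow_succ]; group
      _ = σ i * (σ i * p⁻¹ ^ k * σ i) * p ^ (k + 1) := by
          rw [show σ i * (σ i * p⁻¹ ^ k * σ i) = (σ i * σ i) * p⁻¹ ^ k * σ i by group,
            hsi, one_mul]
      _ = σ i * p ^ k * p ^ (k + 1) := by rw [H2']
      _ = σ i * p ^ (2 * k + 1) := by
          rw [mul_assoc, ← pow_add]; congr 2; omega
  have Id2 : ∀ k, p⁻¹ ^ k * (σ j * σ i * σ j) * p ^ k = σ i * p ^ (2 * k + 2) := by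
    intro k
    have hj2 : σ j * σ i * σ j = p⁻¹ * σ j := by
      rw [hpdef, mul_inv_rev, cs.inv_simple, cs.inv_simple]
    calc p⁻¹ ^ k * (σ j * σ i * σ j) * p ^ k
        = p⁻¹ ^ (k + 1) * σ j * p ^ (k + 1) * p⁻¹ := by
          rw [hj2, pow_succ, pow_succ]; group
      _ = σ i * p ^ (2 * (k + 1) + 1) * p⁻¹ := by rw [Id1 (k + 1)]
      _ = σ i * p ^ (2 * k + 2) := by
          rw [mul_assoc, show p ^ (2 * (k + 1) + 1) * p⁻¹ = p ^ (2 * k + 2) by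
            rw [show 2 * (k + 1) + 1 = (2 * k + 2) + 1 by omega, pow_succ]; group]
  -- the power formula
  set g := etaPerm cs i * etaPerm cs j with hg
  have g_apply : ∀ t : W, ∀ ε : ZMod 2,
      g (t, ε) = (p * t * p⁻¹, ε + χ t (σ j) + χ t (σ j * σ i * σ j)) := by
    intro t ε
    rw [hg]
    show etaPerm cs i (etaPerm cs j (t, ε)) = _
    rw [etaPerm_apply, etaPerm_apply]
    refine Prod.ext ?_ ?_
    · show σ i * (σ j * t * σ j) * σ i = p * t * p⁻¹
      rw [hpdef, mul_inv_rev, cs.inv_simple, cs.inv_simple]; group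
    · show ε + χ t (σ j) + χ (σ j * t * σ j) (σ i) = ε + χ t (σ j) + χ t (σ j * σ i * σ j)
      congr 1
      rw [show σ j * t * σ j = σ j * t * (σ j)⁻¹ by rw [cs.inv_simple], χ_conj]
      congr 1
      rw [cs.inv_simple]
  have powg : ∀ k, ∀ t : W, ∀ ε : ZMod 2,
      (g ^ k) (t, ε) = (p ^ k * t * p⁻¹ ^ k,
        ε + ∑ r ∈ Finset.range (2 * k), χ t (σ i * p ^ (r + 1))) := by
    intro k
    induction k with
    | zero => intro t ε; simp
    | succ k ih =>
      intro t ε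
      rw [pow_succ']
      show g ((g ^ k) (t, ε)) = _
      rw [ih t ε, g_apply]
      refine Prod.ext ?_ ?_
      · show p * (p ^ k * t * p⁻¹ ^ k) * p⁻¹ = p ^ (k+1) * t * p⁻¹ ^ (k+1)
        rw [pow_succ', pow_succ]; group
      · show (ε + ∑ r ∈ Finset.range (2 * k), χ t (σ i * p ^ (r + 1)))
            + χ (p ^ k * t * p⁻¹ ^ k) (σ j) + χ (p ^ k * t * p⁻¹ ^ k) (σ j * σ i * σ j)
            = ε + ∑ r ∈ Finset.range (2 * (k+1)), χ t (σ i * p ^ (r + 1))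
        have e1 : χ (p ^ k * t * p⁻¹ ^ k) (σ j) = χ t (σ i * p ^ (2 * k + 1)) := by
          rw [show p⁻¹ ^ k = (p ^ k)⁻¹ by rw [inv_pow], χ_conj]
          congr 1
          rw [show (p ^ k)⁻¹ = p⁻¹ ^ k by rw [inv_pow], Id1]
        have e2 : χ (p ^ k * t * p⁻¹ ^ k) (σ j * σ i * σ j)
            = χ t (σ i * p ^ (2 * k + 2)) := by
          rw [show p⁻¹ ^ k = (p ^ k)⁻¹ by rw [inv_pow], χ_conj]
          congr 1
          rw [show (p ^ k)⁻¹ = p⁻¹ ^ k by rw [inv_pow], Id2]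
        rw [e1, e2, show 2 * (k + 1) = (2 * k) + 1 + 1 by omega,
          Finset.sum_range_succ, Finset.sum_range_succ]
        rw [show (2*k)+1+1 = 2*k+2 by omega, show 2*k+1 = 2*k+1 by rfl]
        abel
  -- conclude
  refine Equiv.ext fun x => ?_
  rcases x with ⟨t, ε⟩
  have hsum : ∑ r ∈ Finset.range (2 * m), χ t (σ i * p ^ (r + 1)) = 0 := by
    rw [show 2 * m = m + m by omega, Finset.sum_range_add]
    have h5 : ∀ r, χ t (σ i * p ^ (m + r + 1)) = χ t (σ i * p ^ (r + 1)) := by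
      intro r
      congr 2
      rw [show m + r + 1 = m + (r + 1) by omega, pow_add, hp, one_mul]
    rw [Finset.sum_congr rfl (fun r _ => h5 r)]
    generalize (∑ r ∈ Finset.range m, χ t (σ i * p ^ (r + 1))) = S
    rw [show S + S = 2 * S by ring, show (2 : ZMod 2) = 0 by decide, zero_mul]
  rw [powg m t ε, hsum, hp, show (p : W)⁻¹ ^ m = (p ^ m)⁻¹ by rw [inv_pow], hp]
  simp

/-- The permutation representation of `W` on `W × ZMod 2`. -/
noncomputable def phi : W →* Equiv.Perm (W × ZMod 2) :=
  cs.lift ⟨fun i => etaPerm cs i, etaPerm_liftable cs⟩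

lemma phi_simple (i : B) : phi cs (σ i) = etaPerm cs i :=
  cs.lift_apply_simple (etaPerm_liftable cs) i

/-- Mod-2 multiplicity of `t` in a list. -/
def riSum (l : List W) (t : W) : ZMod 2 := (l.map (fun x => χ t x)).sum

lemma riSum_nil (t : W) : riSum ([] : List W) t = 0 := rfl

lemma riSum_cons (x : W) (l : List W) (t : W) :
    riSum (x :: l) t = χ t x + riSum l t := by
  simp [riSum]

lemma riSum_eq_zero_of_not_mem {l : List W} {t : W} (h : t ∉ l) : riSum l t = 0 := by
  induction l with
  | nil => rfl
  | cons x l ih =>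
    rw [riSum_cons, ih (fun hm => h (List.mem_cons_of_mem x hm))]
    have : t ≠ x := fun he => h (he ▸ List.mem_cons_self)
    rw [χ, if_neg this, add_zero]

lemma phi_wordProd (ω : List B) (t : W) (ε : ZMod 2) :
    phi cs (π ω) (t, ε) = (π ω * t * (π ω)⁻¹, ε + riSum (cs.rightInvSeq ω) t) := by
  induction ω generalizing ε with
  | nil => simp [riSum_nil]
  | cons i ω ih =>
    rw [cs.wordProd_cons, map_mul, phi_simple]
    show etaPerm cs i (phi cs (π ω) (t, ε)) = _
    rw [ih, etaPerm_apply]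
    refine Prod.ext ?_ ?_
    · show σ i * (π ω * t * (π ω)⁻¹) * σ i = (σ i * π ω) * t * (σ i * π ω)⁻¹
      rw [mul_inv_rev, cs.inv_simple]; group
    · show ε + riSum (cs.rightInvSeq ω) t + χ (π ω * t * (π ω)⁻¹) (σ i)
          = ε + riSum (cs.rightInvSeq (i :: ω)) t
      have hc : cs.rightInvSeq (i :: ω) = ((π ω)⁻¹ * σ i * π ω) :: cs.rightInvSeq ω := rfl
      rw [hc, riSum_cons, χ_conj]
      abel

/-- The cocycle `nf w t`: mod 2 multiplicity of the reflection `t` in any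
inversion sequence of a word for `w`. -/
noncomputable def nf (w t : W) : ZMod 2 := (phi cs w (t, 0)).2

lemma nf_wordProd (ω : List B) (t : W) : nf cs (π ω) t = riSum (cs.rightInvSeq ω) t := by
  rw [nf, phi_wordProd, zero_add]

lemma phi_apply (w t : W) (ε : ZMod 2) :
    phi cs w (t, ε) = (w * t * w⁻¹, ε + nf cs w t) := by
  obtain ⟨ω, _, rfl⟩ := cs.exists_isReduced w
  rw [phi_wordProd, nf_wordProd]

lemma nf_mul (u v t : W) : nf cs (u * v) t = nf cs v t + nf cs u (v * t * v⁻¹) := by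
  have h : phi cs (u * v) (t, 0) = phi cs u (phi cs v (t, 0)) := by
    rw [map_mul]; rfl
  rw [phi_apply, phi_apply, phi_apply] at h
  have := congrArg Prod.snd h
  simpa using this

lemma nf_one (t : W) : nf cs 1 t = 0 := by
  rw [nf, map_one]; rfl

lemma nf_simple_self (i : B) : nf cs (σ i) (σ i) = 1 := by
  rw [nf, phi_simple, etaPerm_apply]
  show (0 : ZMod 2) + χ (σ i) (σ i) = 1
  rw [χ, if_pos rfl, zero_add]

lemma nf_reflection_self {t : W} (ht : cs.IsReflection t) : nf cs t t = 1 := by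
  obtain ⟨u, i, rfl⟩ := ht
  set t := u * σ i * u⁻¹ with hT
  have h1 : u⁻¹ * t * u = σ i := by rw [hT]; group
  have h0 : nf cs u⁻¹ t + nf cs u (σ i) = 0 := by
    have h := nf_mul cs u u⁻¹ t
    rw [mul_inv_cancel, nf_one, inv_inv, h1] at h
    exact h.symm
  have A := nf_mul cs (u * σ i) u⁻¹ t
  rw [inv_inv, h1] at A
  have B := nf_mul cs u (σ i) (σ i)
  rw [cs.inv_simple, show σ i * σ i * σ i = σ i by
    rw [cs.simple_mul_simple_self, one_mul], nf_simple_self] at B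
  rw [B, ← hT] at A
  rw [A, show nf cs u⁻¹ t + (1 + nf cs u (σ i))
    = (nf cs u⁻¹ t + nf cs u (σ i)) + 1 by ring, h0, zero_add]

lemma zmod2_cases (x : ZMod 2) : x = 0 ∨ x = 1 := by
  fin_cases x
  · exact Or.inl rfl
  · exact Or.inr rfl

lemma exists_reduced_word_len (w : W) : ∃ ω : List B, ω.length = ℓ w ∧ w = π ω := by
  obtain ⟨ω, h1, h2⟩ := cs.exists_isReduced w
  exact ⟨ω, by rw [h2]; exact h1.symm, h2⟩

lemma length_lt_of_nf_eq_one {w t : W} (ht : cs.IsReflection t) (h : nf cs w t = 1) :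
    ℓ (w * t) < ℓ w := by
  obtain ⟨ω, hlen, hw⟩ := exists_reduced_word_len cs w
  have hred : cs.IsReduced ω := by rw [CoxeterSystem.IsReduced, ← hw]; exact hlen.symm
  have hmem : t ∈ cs.rightInvSeq ω := by
    by_contra hmem
    rw [hw, nf_wordProd, riSum_eq_zero_of_not_mem hmem] at h
    exact absurd h (by decide)
  rw [hw]
  exact (cs.isRightInversion_of_mem_rightInvSeq hred hmem).2

lemma nf_eq_one_of_length_lt {w t : W} (ht : cs.IsReflection t) (h : ℓ (w * t) < ℓ w) :
    nf cs w t = 1 := by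
  rcases zmod2_cases (nf cs w t) with h0 | h1
  · exfalso
    have key : nf cs w t = 1 + nf cs (w * t) t := by
      have := nf_mul cs (w * t) t t
      rw [show w * t * t = w by rw [mul_assoc, ht.mul_self, mul_one]] at this
      rw [show t * t * t⁻¹ = t by rw [ht.mul_self, one_mul, ht.inv]] at this
      rw [nf_reflection_self cs ht] at this
      exact this
    rw [h0] at key
    have h2 : nf cs (w * t) t = 1 := by
      rcases zmod2_cases (nf cs (w * t) t) with h3 | h3
      · rw [h3, add_zero] at key; exact absurd key.symm (by decide)
      · exact h3
    have := length_lt_of_nf_eq_one cs ht h2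
    rw [mul_assoc, ht.mul_self, mul_one] at this
    omega
  · exact h1

/-- Strong exchange property, for arbitrary (not necessarily reduced) words. -/
lemma strong_exchange {t : W} (ht : cs.IsReflection t) (ω : List B)
    (h : ℓ (π ω * t) < ℓ (π ω)) :
    ∃ j, ∃ _ : j < ω.length, π ω * t = π (ω.eraseIdx j) := by
  have h1 : nf cs (π ω) t = 1 := nf_eq_one_of_length_lt cs ht h
  rw [nf_wordProd] at h1
  have hmem : t ∈ cs.rightInvSeq ω := by
    by_contra hmem
    rw [riSum_eq_zero_of_not_mem hmem] at h1
    exact absurd h1 (by decide)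
  obtain ⟨j, hj, hjt⟩ := List.mem_iff_getElem.mp hmem
  rw [cs.length_rightInvSeq] at hj
  refine ⟨j, hj, ?_⟩
  have := cs.wordProd_mul_getD_rightInvSeq ω j
  rw [List.getD_eq_getElem _ _ (by rw [cs.length_rightInvSeq]; exact hj), hjt] at this
  exact this

/-! ### Basic Bruhat order lemmas -/

lemma bLE_refl (w : W) : bruhatLE cs w w := Relation.ReflTransGen.refl

lemma bLE_trans {a b c : W} (h1 : bruhatLE cs a b) (h2 : bruhatLE cs b c) :
    bruhatLE cs a c := Relation.ReflTransGen.trans h1 h2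

lemma bLE_step {a t : W} (ht : cs.IsReflection t) (h : ℓ a < ℓ (a * t)) :
    bruhatLE cs a (a * t) :=
  Relation.ReflTransGen.single ⟨h, t, ht, rfl⟩

lemma bLE_length_le {a b : W} (h : bruhatLE cs a b) : ℓ a ≤ ℓ b := by
  induction h with
  | refl => exact le_refl _
  | tail _ h ih => exact ih.trans (le_of_lt h.1)

lemma refl_conj_simple (i : B) {t : W} (ht : cs.IsReflection t) :
    cs.IsReflection (σ i * t * σ i) := by
  have := ht.conj (σ i)
  rwa [cs.inv_simple] at this

lemma mul_simple_conj (b t : W) (i : B) :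
    (b * σ i) * (σ i * t * σ i) = b * t * σ i := by
  rw [show (b * σ i) * (σ i * t * σ i) = b * (σ i * σ i) * (t * σ i) by group,
    cs.simple_mul_simple_self, mul_one, ← mul_assoc]

/-- If `s i` and the reflection `t` are both right descents of `z`, then either
`z t = z s i`, or `z t s i` is strictly shorter than `z s i`. -/
lemma exchange_last {z t : W} (i : B) (ht : cs.IsReflection t)
    (hzi : ℓ (z * σ i) < ℓ z) (hzt : ℓ (z * t) < ℓ z) :
    z * t = z * σ i ∨ ℓ (z * t * σ i) < ℓ (z * σ i) := by
  obtain ⟨κ, hκlen, hκ⟩ := exists_reduced_word_len cs (z * σ i)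
  have hzw : π (κ ++ [i]) = z := by
    rw [cs.wordProd_append, ← hκ, cs.wordProd_singleton, cs.simple_mul_simple_cancel_right]
  obtain ⟨j, hj, hjw⟩ := strong_exchange cs ht (κ ++ [i]) (by rw [hzw]; exact hzt)
  rw [hzw] at hjw
  rw [List.length_append, List.length_singleton] at hj
  rcases lt_or_ge j κ.length with hlt | hge
  · right
    rw [List.eraseIdx_append_of_lt_length hlt, cs.wordProd_append,
      cs.wordProd_singleton] at hjw
    have : z * t * σ i = π (κ.eraseIdx j) := by
      rw [hjw, cs.simple_mul_simple_cancel_right]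
    have hlen2 := cs.length_wordProd_le (κ.eraseIdx j)
    rw [← this] at hlen2
    have := List.length_eraseIdx_add_one hlt
    omega
  · left
    have hj' : j = κ.length := by omega
    rw [hj', List.eraseIdx_append_of_length_le (le_refl _), Nat.sub_self] at hjw
    simp only [List.eraseIdx, List.append_nil] at hjw
    rw [hjw, hκ]

/-- Claim C : one-step lifting. If `x ≤ y` then `x sᵢ ≤ y` or `x sᵢ ≤ y sᵢ`. -/
lemma claimC : ∀ n x y, ℓ y ≤ n → bruhatLE cs x y → ∀ i : B,
    bruhatLE cs (x * σ i) y ∨ bruhatLE cs (x * σ i) (y * σ i) := by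
  intro n
  induction n with
  | zero =>
    intro x y hy hxy i
    rcases hxy.cases_tail with heq | ⟨b, _, hstep⟩
    · subst heq; right; exact bLE_refl cs _
    · exact absurd hstep.1 (by omega)
  | succ n ihn =>
    intro x y hy hxy i
    rcases hxy.cases_tail with heq | ⟨b, hxb, hstep⟩
    · subst heq; right; exact bLE_refl cs _
    · obtain ⟨hlt, t, ht, rfl⟩ := hstep
      have hbn : ℓ b ≤ n := by omega
      rcases ihn x b hbn hxb i with h1 | h2
      · left
        exact bLE_trans cs h1 (Relation.ReflTransGen.single ⟨hlt, t, ht, rfl⟩)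
      · rcases lt_or_ge (ℓ (b * σ i)) (ℓ (b * t * σ i)) with hl | hl
        · right
          exact bLE_trans cs h2 (Relation.ReflTransGen.single
            ⟨hl, σ i * t * σ i, refl_conj_simple cs i ht, (mul_simple_conj cs b t i).symm⟩)
        · have hylt : ℓ (b * t * σ i) < ℓ (b * t) := by
            rcases cs.length_mul_simple (b * t) i with h5 | h5 <;>
              rcases cs.length_mul_simple b i with h4 | h4 <;> omega
          have hyt : ℓ (b * t * t) < ℓ (b * t) := by
            rw [mul_assoc, ht.mul_self, mul_one]; exact hlt
          rcases exchange_last cs i ht hylt hyt with hcase | hcase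
          · have hb : b = b * t * σ i := by
              rw [← hcase, mul_assoc, ht.mul_self, mul_one]
            have hbs : b * σ i = b * t := by
              conv_lhs => rw [hb, cs.simple_mul_simple_cancel_right]
            left; rwa [hbs] at h2
          · exfalso
            rw [mul_assoc b t t, ht.mul_self, mul_one] at hcase
            omega

/-- Claim E : descent lifting. If `x ≤ z`, `s i` is an ascent of `x` and a descent
of `z`, then `x ≤ z s i`. -/
lemma claimE : ∀ n x z, ℓ z ≤ n → bruhatLE cs x z → ∀ i : B,
    ℓ x < ℓ (x * σ i) → ℓ (z * σ i) < ℓ z → bruhatLE cs x (z * σ i) := by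
  intro n
  induction n with
  | zero => intro x z hz hxz i hx hzdesc; exact absurd hzdesc (by omega)
  | succ n ihn =>
    intro x z hz hxz i hx hzdesc
    rcases hxz.cases_tail with heq | ⟨b, hxb, hstep⟩
    · subst heq; exact absurd hx (by omega)
    · obtain ⟨hlt, t, ht, rfl⟩ := hstep
      have hyt : ℓ (b * t * t) < ℓ (b * t) := by
        rw [mul_assoc, ht.mul_self, mul_one]; exact hlt
      rcases Nat.lt_or_ge (ℓ (b * σ i)) (ℓ b) with hdesc | hasc
      · -- s i is a descent of b
        have hxbs : bruhatLE cs x (b * σ i) := ihn x b (by omega) hxb i hx hdesc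
        rcases exchange_last cs i ht hzdesc hyt with hcase | hcase
        · have hb : b = b * t * σ i := by
            rw [← hcase, mul_assoc, ht.mul_self, mul_one]
          rw [← hb]; exact hxb
        · rw [mul_assoc b t t, ht.mul_self, mul_one] at hcase
          exact bLE_trans cs hxbs (Relation.ReflTransGen.single
            ⟨hcase, σ i * t * σ i, refl_conj_simple cs i ht, (mul_simple_conj cs b t i).symm⟩)
      · -- s i is an ascent of b
        have hbsasc : ℓ b < ℓ (b * σ i) :=
          Nat.lt_of_le_of_ne hasc (Ne.symm (cs.length_mul_simple_ne b i))
        have hxxs : bruhatLE cs x (x * σ i) := bLE_step cs (cs.isReflection_simple i) hx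
        have hxbs : bruhatLE cs x (b * σ i) := by
          rcases claimC cs (ℓ b) x b (le_refl _) hxb i with h1 | h2
          · exact bLE_trans cs hxxs (bLE_trans cs h1
              (bLE_step cs (cs.isReflection_simple i) hbsasc))
          · exact bLE_trans cs hxxs h2
        rcases exchange_last cs i ht hzdesc hyt with hcase | hcase
        · have hb : b = b * t * σ i := by
            rw [← hcase, mul_assoc, ht.mul_self, mul_one]
          rw [← hb]; exact hxb
        · rw [mul_assoc b t t, ht.mul_self, mul_one] at hcase
          exact bLE_trans cs hxbs (Relation.ReflTransGen.single
            ⟨hcase, σ i * t * σ i, refl_conj_simple cs i ht, (mul_simple_conj cs b t i).symm⟩)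

/-- Ascent lifting: if `x ≤ y` and `s i` is an ascent of `y` then `x sᵢ ≤ y sᵢ`. -/
lemma liftAsc {x y : W} (h : bruhatLE cs x y) (i : B) (hy : ℓ y < ℓ (y * σ i)) :
    bruhatLE cs (x * σ i) (y * σ i) := by
  rcases claimC cs (ℓ y) x y (le_refl _) h i with h1 | h2
  · exact bLE_trans cs h1 (bLE_step cs (cs.isReflection_simple i) hy)
  · exact h2

/-- Cancelling an ascent on both sides. -/
lemma liftCancel {x y : W} {i : B} (h : bruhatLE cs (x * σ i) (y * σ i))
    (hx : ℓ x < ℓ (x * σ i)) (hy : ℓ y < ℓ (y * σ i)) : bruhatLE cs x y := by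
  have hC := claimC cs (ℓ (y * σ i)) (x * σ i) (y * σ i) (le_refl _) h i
  rw [cs.simple_mul_simple_cancel_right] at hC
  rcases hC with h1 | h2
  · have := claimE cs (ℓ (y * σ i)) x (y * σ i) (le_refl _) h1 i hx
      (by rw [cs.simple_mul_simple_cancel_right]; exact hy)
    rwa [cs.simple_mul_simple_cancel_right] at this
  · rwa [cs.simple_mul_simple_cancel_right] at h2

/-- Descent version: if `x ≤ y` and `s i` is a descent of both, then `x sᵢ ≤ y sᵢ`. -/
lemma liftDesc {x y : W} {i : B} (h : bruhatLE cs x y)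
    (hx : ℓ (x * σ i) < ℓ x) (hy : ℓ (y * σ i) < ℓ y) :
    bruhatLE cs (x * σ i) (y * σ i) := by
  rcases claimC cs (ℓ y) x y (le_refl _) h i with h1 | h2
  · exact claimE cs (ℓ y) (x * σ i) y (le_refl _) h1 i
      (by rw [cs.simple_mul_simple_cancel_right]; exact hx) hy
  · exact h2

/-- Subword property (downward direction), for arbitrary words. -/
lemma subword {y u : W} (h : bruhatLE cs u y) (ω : List B) (hω : π ω = y) :
    ∃ ω', ω'.Sublist ω ∧ π ω' = u := by
  induction h using Relation.ReflTransGen.head_induction_on with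
  | refl => exact ⟨ω, List.Sublist.refl ω, hω⟩
  | head hac _ ih =>
    obtain ⟨ω', hsub, hπ⟩ := ih
    obtain ⟨hlen, t, ht, hc⟩ := hac
    rename_i a c _
    have hct : ℓ (π ω' * t) < ℓ (π ω') := by
      rw [hπ, hc, mul_assoc, ht.mul_self, mul_one]
      rw [← hc]; exact hlen
    obtain ⟨j, hj, hjw⟩ := strong_exchange cs ht ω' hct
    refine ⟨ω'.eraseIdx j, (List.eraseIdx_sublist ω' j).trans hsub, ?_⟩
    rw [← hjw, hπ, hc, mul_assoc, ht.mul_self, mul_one]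

/-! ### Parabolic subgroups -/

lemma wordProd_mem_parabolic {I : Set B} {ω : List B} (hω : ∀ b ∈ ω, b ∈ I) :
    π ω ∈ parabolic cs I := by
  induction ω with
  | nil => rw [cs.wordProd_nil]; exact Subgroup.one_mem _
  | cons i ω ih =>
    rw [cs.wordProd_cons]
    exact Subgroup.mul_mem _
      (Subgroup.subset_closure ⟨i, hω i (List.mem_cons_self), rfl⟩)
      (ih fun b hb => hω b (List.mem_cons_of_mem i hb))

lemma exists_word_of_mem_parabolic {I : Set B} {u : W} (hu : u ∈ parabolic cs I) :
    ∃ ω : List B, (∀ b ∈ ω, b ∈ I) ∧ π ω = u := by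
  induction hu using Subgroup.closure_induction with
  | mem x hx =>
    obtain ⟨i, hi, rfl⟩ := hx
    exact ⟨[i], by simpa using hi, cs.wordProd_singleton i⟩
  | one => exact ⟨[], by simp, cs.wordProd_nil⟩
  | mul x y hx hy ihx ihy =>
    obtain ⟨ω₁, h1, rfl⟩ := ihx
    obtain ⟨ω₂, h2, rfl⟩ := ihy
    refine ⟨ω₁ ++ ω₂, ?_, cs.wordProd_append ω₁ ω₂⟩
    intro b hb
    rcases List.mem_append.mp hb with h | h
    exacts [h1 b h, h2 b h]
  | inv x hx ihx =>
    obtain ⟨ω, h1, rfl⟩ := ihx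
    exact ⟨ω.reverse, fun b hb => h1 b (List.mem_reverse.mp hb), cs.wordProd_reverse ω⟩

/-- The deletion property. -/
lemma deletion {ω : List B} (h : ¬ cs.IsReduced ω) :
    ∃ ω', ω'.Sublist ω ∧ ω'.length + 2 = ω.length ∧ π ω' = π ω := by
  have hlt : ℓ (π ω) < ω.length :=
    lt_of_le_of_ne (cs.length_wordProd_le ω) h
  have hex : ∃ j, j < ω.length ∧ ¬ (ℓ (π (ω.take (j+1))) = ℓ (π (ω.take j)) + 1) := by
    by_contra hc
    push_neg at hc
    have hall : ∀ k, k ≤ ω.length → ℓ (π (ω.take k)) = k := by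
      intro k
      induction k with
      | zero => intro _; simp
      | succ k ih => intro hk; rw [hc k (by omega), ih (by omega)]
    have := hall ω.length (le_refl _)
    rw [List.take_length] at this
    omega
  obtain ⟨j, hj, hne⟩ := hex
  have htake : ω.take (j+1) = ω.take j ++ [ω[j]] := by
    rw [List.take_succ, List.getElem?_eq_getElem hj]
    rfl
  have hstep : π (ω.take (j+1)) = π (ω.take j) * σ (ω[j]) := by
    rw [htake, cs.wordProd_append, cs.wordProd_singleton]
  have hdesc : ℓ (π (ω.take j) * σ (ω[j])) < ℓ (π (ω.take j)) := by
    rcases cs.length_mul_simple (π (ω.take j)) ω[j] with hc | hc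
    · exact absurd (by rw [hstep]; exact hc) hne
    · omega
  obtain ⟨k, hk, hkw⟩ := strong_exchange cs (cs.isReflection_simple ω[j]) (ω.take j) hdesc
  refine ⟨(ω.take j).eraseIdx k ++ ω.drop (j+1), ?_, ?_, ?_⟩
  · have h1 : ((ω.take j).eraseIdx k).Sublist (ω.take j) := List.eraseIdx_sublist _ _
    have h2 : (ω.drop (j+1)).Sublist (ω.drop j) := by
      rw [List.drop_eq_getElem_cons hj]
      exact List.sublist_cons_self _ _
    have := List.Sublist.append h1 h2
    rwa [List.take_append_drop] at this
  · have h3 := List.length_eraseIdx_add_one hk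
    have h4 : (ω.take j).length = j := by rw [List.length_take]; omega
    rw [List.length_append, List.length_drop]
    omega
  · have hωfull : π ω = π (ω.take (j+1)) * π (ω.drop (j+1)) := by
      rw [← cs.wordProd_append, List.take_append_drop]
    rw [cs.wordProd_append, ← hkw, hωfull, hstep]

/-- Every element of a standard parabolic subgroup has a reduced word with all
letters in `I`. -/
lemma exists_reduced_word_parabolic {I : Set B} {u : W} (hu : u ∈ parabolic cs I) :
    ∃ ω : List B, (∀ b ∈ ω, b ∈ I) ∧ cs.IsReduced ω ∧ π ω = u := by
  suffices H : ∀ n (ω : List B), ω.length ≤ n → (∀ b ∈ ω, b ∈ I) →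
      ∃ ω' : List B, (∀ b ∈ ω', b ∈ I) ∧ cs.IsReduced ω' ∧ π ω' = π ω by
    obtain ⟨ω, hI, rfl⟩ := exists_word_of_mem_parabolic cs hu
    exact H ω.length ω (le_refl _) hI
  intro n
  induction n with
  | zero =>
    intro ω h hI
    have : ω = [] := List.eq_nil_of_length_eq_zero (by omega)
    subst this
    exact ⟨[], by simp, by simp [CoxeterSystem.IsReduced], rfl⟩
  | succ n ih =>
    intro ω h hI
    by_cases hred : cs.IsReduced ω
    · exact ⟨ω, hI, hred, rfl⟩
    · obtain ⟨ω', hsub, hlen, hπ⟩ := deletion cs hred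
      obtain ⟨ω'', a, b, c⟩ := ih ω' (by omega) (fun x hx => hI x (hsub.subset hx))
      exact ⟨ω'', a, b, by rw [c, hπ]⟩

/-- Parabolic subgroups are downward closed in Bruhat order. -/
lemma parabolic_bruhat_closed {I : Set B} {z w : W} (hw : w ∈ parabolic cs I)
    (h : bruhatLE cs z w) : z ∈ parabolic cs I := by
  induction h using Relation.ReflTransGen.head_induction_on with
  | refl => exact hw
  | head hac _ ih =>
    rename_i a c _
    obtain ⟨hlen, t, ht, hc⟩ := hac
    obtain ⟨ω, hI, _, hπ⟩ := exists_reduced_word_parabolic cs ih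
    have hct : ℓ (π ω * t) < ℓ (π ω) := by
      rw [hπ, hc, mul_assoc, ht.mul_self, mul_one, ← hc]
      exact hlen
    obtain ⟨j, hj, hjw⟩ := strong_exchange cs ht ω hct
    have ha : a = π (ω.eraseIdx j) := by
      rw [← hjw, hπ, hc, mul_assoc, ht.mul_self, mul_one]
    rw [ha]
    exact wordProd_mem_parabolic cs
      (fun x hx => hI x ((List.eraseIdx_sublist ω j).subset hx))

/-- Length additivity for minimal coset representatives. -/
lemma length_mul_min_rep {I : Set B} {ς : W} (hς : IsMinCosetRep cs I ς) {u : W}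
    (hu : u ∈ parabolic cs I) : ℓ (u * ς) = ℓ u + ℓ ς := by
  have hle : ℓ (u * ς) ≤ ℓ u + ℓ ς := cs.length_mul_le u ς
  by_contra hcon
  obtain ⟨ωu, hIu, hredu, hπu⟩ := exists_reduced_word_parabolic cs hu
  obtain ⟨ως, hςlen, hςw⟩ := exists_reduced_word_len cs ς
  have hωu_len : ωu.length = ℓ u := by rw [← hπu]; exact hredu.symm
  have hfull : π (ωu ++ ως) = u * ς := by rw [cs.wordProd_append, hπu, ← hςw]
  have hnred : ¬ cs.IsReduced (ωu ++ ως) := by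
    rw [CoxeterSystem.IsReduced, hfull, List.length_append]
    omega
  obtain ⟨ω', hsub, hlen2, hπ2⟩ := deletion cs hnred
  rw [hfull] at hπ2
  obtain ⟨l₁, l₂, rfl, hs1, hs2⟩ := List.sublist_append_iff.mp hsub
  have hu1 : π l₁ ∈ parabolic cs I :=
    wordProd_mem_parabolic cs (fun x hx => hIu x (hs1.subset hx))
  rw [cs.wordProd_append] at hπ2
  have heq : π l₂ = (π l₁)⁻¹ * (u * ς) := by rw [← hπ2]; group
  have hmin := hς ((π l₁)⁻¹ * u)
    (Subgroup.mul_mem _ (Subgroup.inv_mem _ hu1) hu)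
  rw [mul_assoc, ← heq] at hmin
  have hA : ℓ (π l₂) ≤ l₂.length := cs.length_wordProd_le l₂
  have hB : l₂.length ≤ ως.length := hs2.length_le
  have hl2e : l₂ = ως := hs2.eq_of_length (by omega)
  have hπl2 : π l₂ = ς := by rw [hl2e, ← hςw]
  have hπl1 : π l₁ = u := by
    rw [hπl2] at hπ2
    exact mul_right_cancel hπ2
  have hC : ℓ u ≤ l₁.length := by rw [← hπl1]; exact cs.length_wordProd_le l₁
  have hD : l₁.length + l₂.length = (l₁ ++ l₂).length := List.length_append.symm
  have hE : (ωu ++ ως).length = ωu.length + ως.length := List.length_append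
  have hF : ως.length = ℓ ς := hςlen
  omega

/-- A two-sided factor decomposition of a minimal coset representative yields
minimal coset representatives with additive lengths. -/
lemma min_rep_prefix {I : Set B} {ς d e : W} (hς : IsMinCosetRep cs I ς) (hde : ς = d * e)
    (hlen : ℓ ς = ℓ d + ℓ e) :
    IsMinCosetRep cs I d ∧ ∀ u ∈ parabolic cs I, ℓ (u * d) = ℓ u + ℓ d := by
  have key : ∀ u ∈ parabolic cs I, ℓ (u * d) = ℓ u + ℓ d := by
    intro u hu
    have h1 : ℓ (u * ς) = ℓ u + ℓ ς := length_mul_min_rep cs hς hu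
    have h2 : ℓ (u * d) ≤ ℓ u + ℓ d := cs.length_mul_le u d
    have h3 : ℓ (u * ς) ≤ ℓ (u * d) + ℓ e := by
      rw [hde, ← mul_assoc]
      exact cs.length_mul_le (u * d) e
    omega
  exact ⟨fun u hu => by rw [key u hu]; omega, key⟩

/-- `1 ≤ v` for every `v`. -/
lemma one_bLE (v : W) : bruhatLE cs 1 v := by
  suffices H : ∀ n v, ℓ v ≤ n → bruhatLE cs 1 v from H (ℓ v) v (le_refl _)
  intro n
  induction n with
  | zero =>
    intro v hv
    have : v = 1 := cs.length_eq_zero_iff.mp (by omega)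
    rw [this]
    exact bLE_refl cs 1
  | succ n ih =>
    intro v hv
    by_cases h1 : v = 1
    · rw [h1]
      exact bLE_refl cs 1
    · obtain ⟨i, hi⟩ := cs.exists_rightDescent_of_ne_one h1
      have hdesc : ℓ (v * σ i) < ℓ v := hi
      have h2 := ih (v * σ i) (by omega)
      have h3 : bruhatLE cs (v * σ i) (v * σ i * σ i) :=
        bLE_step cs (cs.isReflection_simple i)
          (by rw [cs.simple_mul_simple_cancel_right]; omega)
      rw [cs.simple_mul_simple_cancel_right] at h3
      exact bLE_trans cs h2 h3

/-! ### Intervals and minimal coset representatives -/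

lemma refl_conj_inv (j : B) (ς : W) : cs.IsReflection (ς⁻¹ * σ j * ς) := by
  have := (cs.isReflection_simple j).conj ς⁻¹
  rwa [inv_inv] at this

lemma mul_conj_eq (v ς : W) (j : B) : (v * ς) * (ς⁻¹ * σ j * ς) = (v * σ j) * ς := by
  group

/-- `ς ≤ v ς` for `v` in the parabolic subgroup. -/
lemma sigma_bLE_mul {I : Set B} {ς : W} (hς : IsMinCosetRep cs I ς) {v : W}
    (hv : v ∈ parabolic cs I) : bruhatLE cs ς (v * ς) := by
  suffices H : ∀ n v, v ∈ parabolic cs I → ℓ v ≤ n → bruhatLE cs ς (v * ς) from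
    H (ℓ v) v hv (le_refl _)
  intro n
  induction n with
  | zero =>
    intro v hv hn
    have : v = 1 := cs.length_eq_zero_iff.mp (by omega)
    rw [this, one_mul]
    exact bLE_refl cs ς
  | succ n ih =>
    intro v hv hn
    by_cases h1 : v = 1
    · rw [h1, one_mul]
      exact bLE_refl cs ς
    · obtain ⟨ω, hI, hred, hπ⟩ := exists_reduced_word_parabolic cs hv
      have hne : ω ≠ [] := by
        intro hcon
        rw [hcon, cs.wordProd_nil] at hπ
        exact h1 hπ.symm
      set j := ω.getLast hne with hj
      have hsplit : ω = ω.dropLast ++ [j] := (List.dropLast_append_getLast hne).symm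
      set v' := π ω.dropLast with hv'
      have hfact : v = v' * σ j := by
        rw [← hπ, hsplit, cs.wordProd_append, cs.wordProd_singleton]
      have hv'mem : v' ∈ parabolic cs I :=
        wordProd_mem_parabolic cs (fun x hx => hI x (List.dropLast_sublist ω |>.subset hx))
      have hlv : ℓ v = ω.length := by rw [← hπ]; exact hred
      have hlv' : ℓ v' = ℓ v - 1 ∧ 1 ≤ ℓ v := by
        have h2 : ℓ v' ≤ ω.dropLast.length := cs.length_wordProd_le _
      
        have h3 : ℓ v ≤ ℓ v' + 1 := by
          rw [hfact]
          have := cs.length_mul_le v' (σ j)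
          rw [cs.length_simple] at this
          exact this
        have h4 : ω.dropLast.length = ω.length - 1 := List.length_dropLast
        have h5 : 1 ≤ ω.length := by
          cases ω with
          | nil => exact absurd rfl hne
          | cons a l => simp
        omega
      have ihv' := ih v' hv'mem (by omega)
      refine bLE_trans cs ihv' (Relation.ReflTransGen.single
        ⟨?_, ς⁻¹ * σ j * ς, refl_conj_inv cs j ς, by rw [mul_conj_eq, ← hfact]⟩)
      rw [length_mul_min_rep cs hς hv'mem, length_mul_min_rep cs hς hv]
      omega

/-- Monotonicity : if `v ≤ w` inside the parabolic subgroup then `v ς ≤ w ς`. -/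
lemma bLE_mul_right {I : Set B} {ς : W} (hς : IsMinCosetRep cs I ς) {v w : W}
    (hw : w ∈ parabolic cs I) (h : bruhatLE cs v w) :
    bruhatLE cs (v * ς) (w * ς) := by
  induction h using Relation.ReflTransGen.head_induction_on with
  | refl => exact bLE_refl cs _
  | head hac hcw ih =>
    rename_i a c
    obtain ⟨hlen, t, ht, rfl⟩ := hac
    have hc_mem : a * t ∈ parabolic cs I := parabolic_bruhat_closed cs hw hcw
    have ha_mem : a ∈ parabolic cs I := by
      refine parabolic_bruhat_closed cs hc_mem ?_
      exact Relation.ReflTransGen.single ⟨hlen, t, ht, rfl⟩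
    have hrefl : cs.IsReflection (ς⁻¹ * t * ς) := by
      have := ht.conj ς⁻¹
      rwa [inv_inv] at this
    have hlen2 : ℓ (a * ς) < ℓ ((a * t) * ς) := by
      rw [length_mul_min_rep cs hς ha_mem, length_mul_min_rep cs hς hc_mem]
      omega
    exact bLE_trans cs (Relation.ReflTransGen.single
      ⟨hlen2, ς⁻¹ * t * ς, hrefl, by group⟩) ih

/-- Order reflection : cancelling `ς` on the right. -/
lemma bLE_cancel_min_rep : ∀ n {I : Set B} (ς : W), ℓ ς ≤ n → IsMinCosetRep cs I ς →
    ∀ v₁ v₂, v₁ ∈ parabolic cs I → v₂ ∈ parabolic cs I →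
    bruhatLE cs (v₁ * ς) (v₂ * ς) → bruhatLE cs v₁ v₂ := by
  intro n
  induction n with
  | zero =>
    intro I ς hn hς v₁ v₂ h1 h2 hb
    have : ς = 1 := cs.length_eq_zero_iff.mp (by omega)
    rwa [this, mul_one, mul_one] at hb
  | succ n ih =>
    intro I ς hn hς v₁ v₂ h1 h2 hb
    by_cases hone : ς = 1
    · rwa [hone, mul_one, mul_one] at hb
    · obtain ⟨ως, hςlen, hςw⟩ := exists_reduced_word_len cs ς
      have hne : ως ≠ [] := by
        intro hcon
        rw [hcon, cs.wordProd_nil] at hςw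
        exact hone hςw
      set j := ως.getLast hne with hj
      have hsplit : ως = ως.dropLast ++ [j] := (List.dropLast_append_getLast hne).symm
      set ς' := π ως.dropLast with hςd
      have hde : ς = ς' * σ j := by
        rw [hςw, hςd]
        conv_lhs => rw [hsplit]
        rw [cs.wordProd_append, cs.wordProd_singleton]
      have hlς' : ℓ ς' = ℓ ς - 1 ∧ 1 ≤ ℓ ς := by
        have h2 : ℓ ς' ≤ ως.dropLast.length := cs.length_wordProd_le _
        have h3 : ℓ ς ≤ ℓ ς' + 1 := by
          rw [hde]
          have := cs.length_mul_le ς' (σ j)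
          rw [cs.length_simple] at this
          exact this
        have h4 : ως.dropLast.length = ως.length - 1 := List.length_dropLast
        have h5 : 1 ≤ ως.length := by
          cases ως with
          | nil => exact absurd rfl hne
          | cons a l => simp
        omega
      obtain ⟨hς', hadd'⟩ := min_rep_prefix cs hς hde (by rw [cs.length_simple]; omega)
      have hb' : bruhatLE cs ((v₁ * ς') * σ j) ((v₂ * ς') * σ j) := by
        rw [mul_assoc, mul_assoc, ← hde]
        exact hb

      have hasc1 : ℓ (v₁ * ς') < ℓ ((v₁ * ς') * σ j) := by
        rw [hadd' v₁ h1, mul_assoc, ← hde, length_mul_min_rep cs hς h1]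
        omega
      have hasc2 : ℓ (v₂ * ς') < ℓ ((v₂ * ς') * σ j) := by
        rw [hadd' v₂ h2, mul_assoc, ← hde, length_mul_min_rep cs hς h2]
        omega
      have hb'' := liftCancel cs hb' hasc1 hasc2
      exact ih ς' (by omega) hς' v₁ v₂ h1 h2 hb''

/-- Membership : any `u` in the interval `[ς, wς]` lies in the coset `W_I ς`. -/
lemma mem_coset_of_between : ∀ n {I : Set B} (ς : W), ℓ ς ≤ n → IsMinCosetRep cs I ς →
    ∀ {w u : W}, w ∈ parabolic cs I → bruhatLE cs ς u → bruhatLE cs u (w * ς) →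
    ∃ v ∈ parabolic cs I, u = v * ς := by
  intro n
  induction n with
  | zero =>
    intro I ς hn hς w u hw h1 h2
    have hone : ς = 1 := cs.length_eq_zero_iff.mp (by omega)
    rw [hone, mul_one] at h2
    exact ⟨u, parabolic_bruhat_closed cs hw h2, by rw [hone, mul_one]⟩
  | succ n ih =>
    intro I ς hn hς w u hw h1 h2
    by_cases hone : ς = 1
    · rw [hone, mul_one] at h2
      exact ⟨u, parabolic_bruhat_closed cs hw h2, by rw [hone, mul_one]⟩
    · obtain ⟨ως, hςlen, hςw⟩ := exists_reduced_word_len cs ς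
      have hne : ως ≠ [] := by
        intro hcon
        rw [hcon, cs.wordProd_nil] at hςw
        exact hone hςw
      set j := ως.getLast hne with hj
      have hsplit : ως = ως.dropLast ++ [j] := (List.dropLast_append_getLast hne).symm
      set ς' := π ως.dropLast with hςd
      have hde : ς = ς' * σ j := by
        rw [hςw, hςd]
        conv_lhs => rw [hsplit]
        rw [cs.wordProd_append, cs.wordProd_singleton]
      have hdrop_len : ως.dropLast.length = ως.length - 1 := List.length_dropLast
      have hωpos : 1 ≤ ως.length := by
        cases ως with
        | nil => exact absurd rfl hne
        | cons a l => simp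
      have hlς' : ℓ ς' = ℓ ς - 1 ∧ 1 ≤ ℓ ς := by
        have h3 : ℓ ς' ≤ ως.dropLast.length := cs.length_wordProd_le _
        have h4 : ℓ ς ≤ ℓ ς' + 1 := by
          rw [hde]
          have := cs.length_mul_le ς' (σ j)
          rw [cs.length_simple] at this
          exact this
        omega
      obtain ⟨hς', hadd'⟩ := min_rep_prefix cs hς hde (by rw [cs.length_simple]; omega)
      have hςs : ς * σ j = ς' := by rw [hde, cs.simple_mul_simple_cancel_right]
      have hςdesc : ℓ (ς * σ j) < ℓ ς := by rw [hςs]; omega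
      have hwςs : (w * ς) * σ j = w * ς' := by
        rw [hde, ← mul_assoc, cs.simple_mul_simple_cancel_right]
      have hwςdesc : ℓ ((w * ς) * σ j) < ℓ (w * ς) := by
        rw [hwςs, hadd' w hw, length_mul_min_rep cs hς hw]
        omega
      rcases Nat.lt_or_ge (ℓ (u * σ j)) (ℓ u) with hdesc | hasc
      · -- s j is a descent of u
        have h1' : bruhatLE cs ς' (u * σ j) := by
          have := liftDesc cs h1 hςdesc hdesc
          rwa [hςs] at this
        have h2' : bruhatLE cs (u * σ j) (w * ς') := by
          have := liftDesc cs h2 hdesc hwςdesc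
          rwa [hwςs] at this
        obtain ⟨v, hv, hveq⟩ := ih ς' (by omega) hς' hw h1' h2'
        refine ⟨v, hv, ?_⟩
        have : u * σ j * σ j = v * ς' * σ j := by rw [hveq]
        rwa [cs.simple_mul_simple_cancel_right, mul_assoc, ← hde] at this
      · -- s j is an ascent of u : impossible, derive a contradiction
        exfalso
        have hasc' : ℓ u < ℓ (u * σ j) :=
          Nat.lt_of_le_of_ne hasc (Ne.symm (cs.length_mul_simple_ne u j))
        have h2' : bruhatLE cs u (w * ς') := by
          have := claimE cs (ℓ (w * ς)) u (w * ς) (le_refl _) h2 j hasc' hwςdesc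
          rwa [hwςs] at this
        have h1' : bruhatLE cs ς' u := by
          refine bLE_trans cs (Relation.ReflTransGen.single
            ⟨?_, σ j, cs.isReflection_simple j, hde⟩) h1
          omega
        obtain ⟨v', hv', hveq⟩ := ih ς' (by omega) hς' hw h1' h2'
        -- now ς ≤ u = v' ς' contradicts minimality of ς
        obtain ⟨ωv, hIv, hredv, hπv⟩ := exists_reduced_word_parabolic cs hv'
        have hπfull : π (ωv ++ ως.dropLast) = u := by
          rw [cs.wordProd_append, hπv, ← hςd, ← hveq]
        obtain ⟨ω', hsub, hπ'⟩ := subword cs h1 (ωv ++ ως.dropLast) hπfull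
        obtain ⟨l₁, l₂, rfl, hs1, hs2⟩ := List.sublist_append_iff.mp hsub
        rw [cs.wordProd_append] at hπ'
        have ha_mem : π l₁ ∈ parabolic cs I :=
          wordProd_mem_parabolic cs (fun x hx => hIv x (hs1.subset hx))
        have heq2 : π l₂ = (π l₁)⁻¹ * ς := by rw [← hπ']; group
        have hmin := hς (π l₁)⁻¹ (Subgroup.inv_mem _ ha_mem)
        rw [← heq2] at hmin
        have hA : ℓ (π l₂) ≤ l₂.length := cs.length_wordProd_le l₂
        have hB : l₂.length ≤ ως.dropLast.length := hs2.length_le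
        omega

end BruhatAux

open BruhatAux

/-- For ς the minimal length representative of the right coset W_I ς and w ∈ W_I, the map
v ↦ vς is an order isomorphism from the Bruhat interval [e, w] in W_I onto the Bruhat
interval [ς, wς] in W. -/
theorem bruhat_interval_orderIso (cs : CoxeterSystem M W) (I : Set B) (ς : W)
    (hς : IsMinCosetRep cs I ς) (w : W) (hw : w ∈ parabolic cs I) :
    Set.BijOn (· * ς)
      {v | v ∈ parabolic cs I ∧ bruhatLE cs 1 v ∧ bruhatLE cs v w}
      {u | bruhatLE cs ς u ∧ bruhatLE cs u (w * ς)} ∧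
    ∀ v₁ ∈ {v | v ∈ parabolic cs I ∧ bruhatLE cs 1 v ∧ bruhatLE cs v w},
      ∀ v₂ ∈ {v | v ∈ parabolic cs I ∧ bruhatLE cs 1 v ∧ bruhatLE cs v w},
        (bruhatLE cs v₁ v₂ ↔ bruhatLE cs (v₁ * ς) (v₂ * ς)) := by
  letI : DecidableEq W := Classical.decEq W
  constructor
  · refine ⟨?_, ?_, ?_⟩
    · rintro v ⟨hv, _h1, h2⟩
      exact ⟨sigma_bLE_mul cs hς hv, bLE_mul_right cs hς hw h2⟩
    · intro a _ b _ hab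
      exact mul_right_cancel hab
    · rintro u ⟨h1, h2⟩
      obtain ⟨v, hv, rfl⟩ :=
        mem_coset_of_between cs (cs.length ς) ς (le_refl _) hς hw h1 h2
      exact ⟨v, ⟨hv, one_bLE cs v,
        bLE_cancel_min_rep cs (cs.length ς) ς (le_refl _) hς v w hv hw h2⟩, rfl⟩
  · rintro v₁ ⟨hv₁, -, -⟩ v₂ ⟨hv₂, -, -⟩
    constructor
    · intro h
      exact bLE_mul_right cs hς hv₂ h
    · intro h
      exact bLE_cancel_min_rep cs (cs.length ς) ς (le_refl _) hς v₁ v₂ hv₁ hv₂ h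
end

section
/- For v, w in W_I with ς the minimal length coset representative of W_I ς: vς ≤ wς in Bruhat order on W if and only if v ≤ w in Bruhat order on W_I. -/
open CoxeterSystem

variable {B W : Type*} [Group W] {M : CoxeterMatrix B}

open List in

/-- Auxiliary group for the reflection cocycle: pairs (f, x) with twisted multiplication. -/
@[ext] structure Cox2 (W : Type*) where
  fn : W → ZMod 2
  el : W

namespace Cox2

variable [Group W]

instance : Mul (Cox2 W) := ⟨fun a b => ⟨a.fn + fun z => b.fn (a.el⁻¹ * z * a.el), a.el * b.el⟩⟩
instance : One (Cox2 W) := ⟨⟨0, 1⟩⟩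
instance : Inv (Cox2 W) := ⟨fun a => ⟨fun z => a.fn (a.el * z * a.el⁻¹), a.el⁻¹⟩⟩

@[simp] theorem mul_fn (a b : Cox2 W) (z : W) :
    (a * b).fn z = a.fn z + b.fn (a.el⁻¹ * z * a.el) := rfl

@[simp] theorem mul_el (a b : Cox2 W) : (a * b).el = a.el * b.el := rfl

@[simp] theorem one_fn (z : W) : (1 : Cox2 W).fn z = 0 := rfl

@[simp] theorem one_el : (1 : Cox2 W).el = 1 := rfl

@[simp] theorem inv_fn (a : Cox2 W) (z : W) : (a⁻¹).fn z = a.fn (a.el * z * a.el⁻¹) := rfl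

@[simp] theorem inv_el (a : Cox2 W) : (a⁻¹).el = a.el⁻¹ := rfl

instance : Group (Cox2 W) where
  mul_assoc a b c := by ext z <;> simp [mul_assoc, add_assoc]
  one_mul a := by ext z <;> simp
  mul_one a := by ext z <;> simp
  inv_mul_cancel a := by
    ext z
    · simp only [mul_fn, inv_fn, inv_el, inv_inv, one_fn]
      exact CharTwo.add_self_eq_zero _
    · simp

end Cox2

open scoped Classical in
/-- Indicator function of a point, with values in ZMod 2. -/
noncomputable def ind (t : W) : W → ZMod 2 := fun z => if z = t then 1 else 0

@[simp] theorem ind_self (t : W) : ind t t = 1 := by simp [ind]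

theorem ind_of_ne {t z : W} (h : z ≠ t) : ind t z = 0 := by simp [ind, h]

noncomputable def cox2Gen (cs : CoxeterSystem M W) (i : B) : Cox2 W :=
  ⟨ind (cs.simple i), cs.simple i⟩

theorem ind_conj (t x z : W) : ind t (x⁻¹ * z * x) = ind (x * t * x⁻¹) z := by
  unfold ind
  congr 1
  simp only [eq_iff_iff]
  constructor
  · intro h; rw [← h]; group
  · intro h; rw [h]; group

theorem Cox2.pow_el [Group W] (a : Cox2 W) (k : ℕ) : (a ^ k).el = a.el ^ k := by
  induction k with
  | zero => simp
  | succ k ih => rw [pow_succ, pow_succ, Cox2.mul_el, ih]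

namespace CoxeterSystem

variable (cs : CoxeterSystem M W)

local prefix:100 "s" => cs.simple
local prefix:100 "π" => cs.wordProd
local prefix:100 "ℓ" => cs.length

/-- Key dihedral identity: `sᵢ pᵏ sᵢ = p⁻ᵏ` where `p = sᵢ sᵢ'`. -/
theorem simple_mul_pow_mul_simple (i i' : B) (k : ℕ) :
    s i * (s i * s i') ^ k * s i = ((s i * s i') ^ k)⁻¹ := by
  have h0 : s i * (s i * s i') * (s i)⁻¹ = (s i * s i')⁻¹ := by
    simp [mul_assoc, cs.simple_mul_simple_cancel_left]
  calc s i * (s i * s i') ^ k * s i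
      = MulAut.conj (s i) ((s i * s i') ^ k) := by
        rw [MulAut.conj_apply, cs.inv_simple]
    _ = (MulAut.conj (s i) (s i * s i')) ^ k := by rw [map_pow]
    _ = ((s i * s i')⁻¹) ^ k := by rw [MulAut.conj_apply, h0]
    _ = ((s i * s i') ^ k)⁻¹ := by rw [inv_pow]

theorem simple_mul_pow_inv (i i' : B) (k : ℕ) :
    s i * ((s i * s i') ^ k)⁻¹ = (s i * s i') ^ k * s i := by
  rw [← cs.simple_mul_pow_mul_simple i i' k, ← mul_assoc, ← mul_assoc,
    cs.simple_mul_simple_self, one_mul]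

theorem pow_mul_simple_mul_pow_inv (i i' : B) (k : ℕ) :
    (s i * s i') ^ k * (s i * ((s i * s i') ^ k)⁻¹) = (s i * s i') ^ (2 * k) * s i := by
  rw [cs.simple_mul_pow_inv, two_mul, pow_add, mul_assoc]

/-- The generators of the cocycle group are liftable. -/
theorem cox2Gen_isLiftable : M.IsLiftable (cox2Gen cs) := by
  intro i i'
  set p := s i * s i' with hp
  have hFel : (cox2Gen cs i * cox2Gen cs i').el = p := rfl
  have key1 : ∀ k : ℕ, p ^ k * (s i * (p ^ k)⁻¹) = p ^ (2 * k) * s i :=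
    cs.pow_mul_simple_mul_pow_inv i i'
  have key2 : ∀ k : ℕ, (p ^ k * s i) * s i' * (p ^ k * s i)⁻¹ = p ^ (2 * k + 1) * s i := by
    intro k
    rw [mul_inv_rev, cs.inv_simple]
    calc p ^ k * s i * s i' * (s i * (p ^ k)⁻¹)
        = p ^ k * (p * (s i * (p ^ k)⁻¹)) := by rw [hp]; simp only [mul_assoc]
      _ = p ^ k * (p * (p ^ k * s i)) := by rw [cs.simple_mul_pow_inv]
      _ = p ^ (2 * k + 1) * s i := by
          rw [← mul_assoc, ← mul_assoc, ← pow_succ, ← pow_add,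
            show k + 1 + k = 2 * k + 1 by omega]
  have hpow_fn : ∀ k : ℕ, ∀ z : W,
      ((cox2Gen cs i * cox2Gen cs i') ^ k).fn z
        = ∑ j ∈ Finset.range (2 * k), ind (p ^ j * s i) z := by
    intro k
    induction k with
    | zero => intro z; simp
    | succ k ih =>
      intro z
      rw [pow_succ, Cox2.mul_fn, ih, Cox2.pow_el, hFel]
      have hFfn : ∀ w : W, (cox2Gen cs i * cox2Gen cs i').fn w
          = ind (s i) w + ind (s i') ((s i)⁻¹ * w * (s i)) := fun w => rfl
      rw [hFfn]
      have e1 : ind (s i) ((p ^ k)⁻¹ * z * p ^ k) = ind (p ^ (2 * k) * s i) z := by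
        rw [ind_conj]
        congr 1
        rw [mul_assoc, key1 k]
      have e2 : ind (s i') ((s i)⁻¹ * ((p ^ k)⁻¹ * z * p ^ k) * s i)
          = ind (p ^ (2 * k + 1) * s i) z := by
        have harg : (s i)⁻¹ * ((p ^ k)⁻¹ * z * p ^ k) * s i
            = (p ^ k * s i)⁻¹ * z * (p ^ k * s i) := by
          rw [mul_inv_rev, cs.inv_simple]
          simp only [mul_assoc]
        rw [harg, ind_conj, key2 k]
      rw [e1, e2]
      have : 2 * (k + 1) = (2 * k) + 1 + 1 := by ring
      rw [this, Finset.sum_range_succ, Finset.sum_range_succ, add_assoc]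
  show (cox2Gen cs i * cox2Gen cs i') ^ M i i' = 1
  ext z
  · rw [hpow_fn (M i i') z]
    have hp1 : p ^ (M i i') = 1 := cs.simple_mul_simple_pow i i'
    have hper : ∀ j, ind (p ^ (M i i' + j) * s i) z = ind (p ^ j * s i) z := by
      intro j; rw [add_comm, pow_add, hp1, mul_one]
    rw [two_mul, Finset.sum_range_add]
    simp only [Cox2.one_fn]
    rw [Finset.sum_congr rfl (fun j _ => hper j)]
    exact CharTwo.add_self_eq_zero _
  · rw [Cox2.pow_el, hFel, Cox2.one_el]
    exact cs.simple_mul_simple_pow i i'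

/-- The reflection cocycle homomorphism. -/
noncomputable def cox2Hom : W →* Cox2 W := CoxeterSystem.lift cs ⟨cox2Gen cs, cox2Gen_isLiftable cs⟩

theorem cox2Hom_simple (i : B) : cs.cox2Hom (s i) = cox2Gen cs i :=
  cs.lift_apply_simple (cox2Gen_isLiftable cs) i

/-- The reflection cocycle. -/
noncomputable def rcoc (w : W) : W → ZMod 2 := (cs.cox2Hom w).fn

theorem cox2Hom_el (w : W) : (cs.cox2Hom w).el = w := by
  have : (MonoidHom.comp (⟨⟨Cox2.el, rfl⟩, fun a b => rfl⟩ : Cox2 W →* W) cs.cox2Hom) =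
      MonoidHom.id W := by
    apply cs.ext_simple
    intro i
    simp only [MonoidHom.comp_apply, cox2Hom_simple, MonoidHom.id_apply]
    rfl
  exact DFunLike.congr_fun this w

theorem rcoc_mul (x y : W) (z : W) : cs.rcoc (x * y) z = cs.rcoc x z + cs.rcoc y (x⁻¹ * z * x) := by
  unfold rcoc
  rw [map_mul, Cox2.mul_fn, cox2Hom_el]

theorem rcoc_simple (i : B) (z : W) : cs.rcoc (s i) z = ind (s i) z := by
  unfold rcoc
  rw [cox2Hom_simple]
  rfl

theorem rcoc_one (z : W) : cs.rcoc 1 z = 0 := by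
  unfold rcoc; rw [map_one]; rfl

end CoxeterSystem

namespace CoxeterSystem

open List
open scoped Classical

variable (cs : CoxeterSystem M W)

local prefix:100 "s" => cs.simple
local prefix:100 "π" => cs.wordProd
local prefix:100 "ℓ" => cs.length

theorem rcoc_wordProd_count (ω : List B) (t : W) :
    cs.rcoc (π ω) t = ((cs.leftInvSeq ω).count t : ZMod 2) := by
  induction ω generalizing t with
  | nil => simp [rcoc_one, leftInvSeq]
  | cons i ω ih =>
    rw [wordProd_cons, rcoc_mul, rcoc_simple]
    show ind (s i) t + cs.rcoc (π ω) ((s i)⁻¹ * t * (s i)) = _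
    rw [ih]
    have hseq : cs.leftInvSeq (i :: ω) = s i :: List.map (MulAut.conj (s i)) (cs.leftInvSeq ω) :=
      rfl
    rw [hseq, List.count_cons]
    have hinj : Function.Injective (⇑(MulAut.conj (s i))) := (MulAut.conj (s i)).injective
    have htt : t = (MulAut.conj (s i)) ((s i)⁻¹ * t * s i) := by
      simp [MulAut.conj_apply, mul_assoc, cs.simple_mul_simple_cancel_left,
        cs.simple_mul_simple_self]
    have hcount : (List.map (⇑(MulAut.conj (s i))) (cs.leftInvSeq ω)).count t
        = (cs.leftInvSeq ω).count ((s i)⁻¹ * t * s i) := by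
      conv_lhs => rw [htt]
      exact List.count_map_of_injective _ _ hinj _
    rw [hcount]
    push_cast
    rw [add_comm]
    congr 1
    unfold ind
    by_cases h : t = s i
    · simp [h]
    · have h' : ¬(s i = t) := fun e => h e.symm
      simp [h, h']

theorem rcoc_inv (x z : W) : cs.rcoc x⁻¹ z = cs.rcoc x (x * z * x⁻¹) := by
  have h0 : cs.rcoc (x * x⁻¹) (x * z * x⁻¹) = 0 := by
    rw [mul_inv_cancel, rcoc_one]
  rw [rcoc_mul] at h0
  have harg : x⁻¹ * (x * z * x⁻¹) * x = z := by group
  rw [harg] at h0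
  have := CharTwo.add_self_eq_zero (cs.rcoc x (x * z * x⁻¹))
  -- a + b = 0 and a + a = 0 gives b = a
  linear_combination (norm := abel_nf) h0 - this

theorem rcoc_refl_self {t : W} (ht : cs.IsReflection t) : cs.rcoc t t = 1 := by
  obtain ⟨w, i, rfl⟩ := ht
  have e1 : w⁻¹ * (w * s i * w⁻¹) * w = s i := by group
  have e2 : (w * s i)⁻¹ * (w * s i * w⁻¹) * (w * s i) = s i := by
    rw [mul_inv_rev, cs.inv_simple]
    calc s i * w⁻¹ * (w * s i * w⁻¹) * (w * s i)
        = s i * (s i * (s i)) := by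
          rw [show s i * w⁻¹ * (w * s i * w⁻¹) * (w * s i)
              = s i * ((w⁻¹ * w) * s i * (w⁻¹ * w) * s i) by group]
          rw [inv_mul_cancel, one_mul, mul_one]
          try simp [mul_assoc]
      _ = s i := by rw [cs.simple_mul_simple_cancel_left]
  calc cs.rcoc (w * s i * w⁻¹) (w * s i * w⁻¹)
      = cs.rcoc (w * s i) (w * s i * w⁻¹) + cs.rcoc w⁻¹ (s i) := by
        rw [rcoc_mul, e2]
    _ = cs.rcoc w (w * s i * w⁻¹) + cs.rcoc (s i) (s i) + cs.rcoc w⁻¹ (s i) := by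
        rw [rcoc_mul, e1]
    _ = cs.rcoc w (w * s i * w⁻¹) + 1 + cs.rcoc w (w * s i * w⁻¹) := by
        rw [rcoc_simple, ind_self, rcoc_inv]
        try congr 3
        try group
    _ = 1 := by
        rw [show cs.rcoc w (w * s i * w⁻¹) + 1 + cs.rcoc w (w * s i * w⁻¹)
            = (cs.rcoc w (w * s i * w⁻¹) + cs.rcoc w (w * s i * w⁻¹)) + 1 by abel]
        rw [CharTwo.add_self_eq_zero, zero_add]

theorem rcoc_eq_one_iff {t : W} (ht : cs.IsReflection t) (w : W) :
    cs.rcoc w t = 1 ↔ ℓ (t * w) < ℓ w := by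
  constructor
  · intro h
    obtain ⟨ω, hred, rfl⟩ := cs.exists_reduced_word' w
    rw [rcoc_wordProd_count] at h
    have hmem : t ∈ cs.leftInvSeq ω := by
      by_contra hmem
      rw [List.count_eq_zero_of_not_mem hmem] at h
      simp at h
    exact (cs.isLeftInversion_of_mem_leftInvSeq hred hmem).2
  · intro h
    by_contra hne
    have h0 : cs.rcoc w t = 0 := by
      have : ∀ x : ZMod 2, x = 0 ∨ x = 1 := by decide
      rcases this (cs.rcoc w t) with h' | h'
      · exact h'
      · exact absurd h' hne
    have h1 : cs.rcoc (t * w) t = 1 := by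
      rw [rcoc_mul]
      have : t⁻¹ * t * t = t := by rw [inv_mul_cancel, one_mul]
      rw [this, h0, add_zero, rcoc_refl_self cs ht]
    have h2 : ℓ (t * (t * w)) < ℓ (t * w) := by
      -- reuse the forward direction
      obtain ⟨ω, hred, hw⟩ := cs.exists_reduced_word' (t * w)
      rw [hw, rcoc_wordProd_count] at h1
      have hmem : t ∈ cs.leftInvSeq ω := by
        by_contra hmem
        rw [List.count_eq_zero_of_not_mem hmem] at h1
        simp at h1
      rw [hw]
      exact (cs.isLeftInversion_of_mem_leftInvSeq hred hmem).2
    rw [← mul_assoc, ht.mul_self, one_mul] at h2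
    omega

/-- Strong exchange property, left version. -/
theorem strong_exchange_left (ω : List B) {t : W} (ht : cs.IsReflection t)
    (hl : ℓ (t * π ω) < ℓ (π ω)) :
    ∃ j < ω.length, t * π ω = π (ω.eraseIdx j) := by
  have h1 : cs.rcoc (π ω) t = 1 := (cs.rcoc_eq_one_iff ht _).2 hl
  rw [rcoc_wordProd_count] at h1
  have hmem : t ∈ cs.leftInvSeq ω := by
    by_contra hmem
    rw [List.count_eq_zero_of_not_mem hmem] at h1
    simp at h1
  obtain ⟨j, hj, hget⟩ := List.mem_iff_getElem.1 hmem
  rw [cs.length_leftInvSeq] at hj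
  refine ⟨j, hj, ?_⟩
  have : (cs.leftInvSeq ω).getD j 1 = t := by
    rw [List.getD_eq_getElem _ _ (by rw [cs.length_leftInvSeq]; exact hj)]
    exact hget
  rw [← this]
  exact cs.getD_leftInvSeq_mul_wordProd ω j

/-- Strong exchange property, right version. -/
theorem strong_exchange_right (ω : List B) {t : W} (ht : cs.IsReflection t)
    (hl : ℓ (π ω * t) < ℓ (π ω)) :
    ∃ j < ω.length, π ω * t = π (ω.eraseIdx j) := by
  have h1 : cs.rcoc (π ω.reverse) t = 1 := by
    rw [cs.rcoc_eq_one_iff ht]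
    rw [cs.wordProd_reverse]
    have e : ℓ (t * (π ω)⁻¹) = ℓ (π ω * t) := by
      rw [← cs.length_inv (t * (π ω)⁻¹), mul_inv_rev, inv_inv, ht.inv]
    rw [e, cs.length_inv]
    exact hl
  rw [rcoc_wordProd_count] at h1
  have hmem : t ∈ cs.leftInvSeq ω.reverse := by
    by_contra hmem
    rw [List.count_eq_zero_of_not_mem hmem] at h1
    simp at h1
  have hmem' : t ∈ cs.rightInvSeq ω := by
    have hrr := cs.rightInvSeq_reverse ω.reverse
    rw [List.reverse_reverse] at hrr
    rw [hrr, List.mem_reverse]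
    exact hmem
  obtain ⟨j, hj, hget⟩ := List.mem_iff_getElem.1 hmem'
  rw [cs.length_rightInvSeq] at hj
  refine ⟨j, hj, ?_⟩
  have : (cs.rightInvSeq ω).getD j 1 = t := by
    rw [List.getD_eq_getElem _ _ (by rw [cs.length_rightInvSeq]; exact hj)]
    exact hget
  rw [← this]
  exact cs.wordProd_mul_getD_rightInvSeq ω j

end CoxeterSystem

section Bruhat

open List Relation

variable (cs : CoxeterSystem M W)

local prefix:100 "s" => cs.simple
local prefix:100 "π" => cs.wordProd
local prefix:100 "ℓ" => cs.length

theorem bruhat_step_right {t : W} (ht : cs.IsReflection t) {x : W} (h : ℓ x < ℓ (x * t)) :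
    bruhatLE cs x (x * t) :=
  ReflTransGen.single ⟨h, t, ht, rfl⟩

theorem bruhat_step_left {t : W} (ht : cs.IsReflection t) {x : W} (h : ℓ x < ℓ (t * x)) :
    bruhatLE cs x (t * x) := by
  have hc : cs.IsReflection (x⁻¹ * t * x) := by
    have := ht.conj x⁻¹
    rwa [inv_inv] at this
  have he : t * x = x * (x⁻¹ * t * x) := by group
  exact ReflTransGen.single ⟨h, x⁻¹ * t * x, hc, he⟩

theorem bruhat_trans {x y z : W} (h1 : bruhatLE cs x y) (h2 : bruhatLE cs y z) :
    bruhatLE cs x z := ReflTransGen.trans h1 h2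

/-- Any word has a reduced sublist with the same product. -/
theorem exists_reduced_sublist (ω : List B) :
    ∃ σ, σ.Sublist ω ∧ cs.IsReduced σ ∧ π σ = π ω := by
  generalize hn : ω.length = n
  induction n using Nat.strong_induction_on generalizing ω with
  | _ n ih =>
  by_cases hred : cs.IsReduced ω
  · exact ⟨ω, List.Sublist.refl ω, hred, rfl⟩
  · -- find critical index
    classical
    have hPex : ∃ k, ¬cs.IsReduced (ω.take k) := by
      refine ⟨ω.length, ?_⟩
      rwa [List.take_length]
    set k0 := Nat.find hPex with hk0
    have hP0 : cs.IsReduced (ω.take 0) := by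
      simp [CoxeterSystem.IsReduced]
    have hk0pos : 0 < k0 := by
      rcases Nat.eq_zero_or_pos k0 with h | h
      · exfalso; have := Nat.find_spec hPex; rw [← hk0, h] at this; exact this hP0
      · exact h
    set k := k0 - 1 with hk
    have hkred : cs.IsReduced (ω.take k) := by
      have h2 : k < k0 := by omega
      have := Nat.find_min hPex h2
      exact not_not.mp this
    have hknot : ¬cs.IsReduced (ω.take (k + 1)) := by
      have : k + 1 = k0 := by omega
      rw [this]
      exact Nat.find_spec hPex
    have hklt : k < ω.length := by
      have hle : k0 ≤ ω.length := Nat.find_le (by rwa [List.take_length])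
      rcases Nat.lt_or_ge k ω.length with h | h
      · exact h
      · exfalso
        have : ω.take k = ω := List.take_of_length_le h
        rw [this] at hkred
        have : ω.take (k+1) = ω := List.take_of_length_le (by omega)
        rw [this] at hknot
        exact hknot hkred
    have htk : ω.take (k+1) = ω.take k ++ [ω[k]] := by
      rw [List.take_succ, List.getElem?_eq_getElem hklt]
      rfl
    have hlen_take : (ω.take k).length = k := List.length_take_of_le (by omega)
    have hlk : ℓ (π (ω.take k)) = k := by
      have h := hkred
      unfold CoxeterSystem.IsReduced at h
      rw [h, hlen_take]
    have hdrop : ℓ (π (ω.take k) * s (ω[k])) < ℓ (π (ω.take k)) := by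
      have h1 : π (ω.take (k+1)) = π (ω.take k) * s (ω[k]) := by
        rw [htk, cs.wordProd_append, cs.wordProd_singleton]
      rcases cs.length_mul_simple (π (ω.take k)) (ω[k]) with h | h
      · exfalso
        apply hknot
        show ℓ (π (ω.take (k+1))) = (ω.take (k+1)).length
        have hl2 : (ω.take (k+1)).length = k + 1 := by rw [List.length_take]; omega
        rw [h1, h, hlk, hl2]
      · omega
    obtain ⟨j, hjlt, hje⟩ := cs.strong_exchange_right (ω.take k) (cs.isReflection_simple (ω[k])) hdrop
    set ω' := (ω.take k).eraseIdx j ++ ω.drop (k+1) with hω'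
    have hsub : ω'.Sublist ω := by
      have h1 : ((ω.take k).eraseIdx j).Sublist (ω.take (k+1)) := by
        rw [htk]
        exact ((ω.take k).eraseIdx_sublist j).trans (List.sublist_append_left _ _)
      have := h1.append (List.Sublist.refl (ω.drop (k+1)))
      rwa [List.take_append_drop] at this
    have hπ : π ω' = π ω := by
      conv_rhs => rw [← List.take_append_drop (k+1) ω]
      rw [hω', cs.wordProd_append, cs.wordProd_append, htk, cs.wordProd_append,
        cs.wordProd_singleton, hje]
    have hlen' : ω'.length < n := by
      have e1 : ((ω.take k).eraseIdx j).length + 1 = (ω.take k).length :=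
        List.length_eraseIdx_add_one hjlt
      have e2 : ω'.length = ((ω.take k).eraseIdx j).length + (ω.drop (k+1)).length := by
        rw [hω', List.length_append]
      have e3 : (ω.drop (k+1)).length = ω.length - (k+1) := List.length_drop
      omega
    obtain ⟨σ, h1, h2, h3⟩ := ih ω'.length hlen' ω' rfl
    exact ⟨σ, h1.trans hsub, h2, h3.trans hπ⟩

/-- Direction 1: if `u ≤ w` in Bruhat order, every reduced word for `w` has a reduced
sublist whose product is `u`. -/
theorem exists_reduced_sublist_of_bruhatLE {u w : W} (h : bruhatLE cs u w) :
    ∀ ω : List B, cs.IsReduced ω → π ω = w → ∃ σ, σ.Sublist ω ∧ cs.IsReduced σ ∧ π σ = u := by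
  induction h with
  | refl => exact fun ω hred hw => ⟨ω, List.Sublist.refl ω, hred, hw⟩
  | @tail w' w'' hchain hstep ih =>
    intro ω hred hw
    obtain ⟨hlen, t, ht, rfl⟩ := hstep
    have hmt : π ω * t = w' := by rw [hw, mul_assoc, ht.mul_self, mul_one]
    have hlt : ℓ (π ω * t) < ℓ (π ω) := by rw [hmt, hw]; exact hlen
    obtain ⟨j, hj, hje⟩ := cs.strong_exchange_right ω ht hlt
    obtain ⟨σ', hσ'sub, hσ'red, hσ'π⟩ := exists_reduced_sublist cs (ω.eraseIdx j)
    obtain ⟨σ, h1, h2, h3⟩ := ih σ' hσ'red (by rw [hσ'π, ← hje, hmt])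
    exact ⟨σ, h1.trans (hσ'sub.trans (ω.eraseIdx_sublist j)), h2, h3⟩

end Bruhat

section SWP

open List Relation

variable (cs : CoxeterSystem M W)

local prefix:100 "s" => cs.simple
local prefix:100 "π" => cs.wordProd
local prefix:100 "ℓ" => cs.length

theorem swp (n : ℕ) :
    (∀ ω : List B, ω.length = n → cs.IsReduced ω →
      ∀ σ : List B, σ.Sublist ω → bruhatLE cs (π σ) (π ω)) ∧
    (∀ b : W, ℓ b = n → ∀ (i : B) (a : W), bruhatLE cs a b →
      bruhatLE cs (s i * a) b ∨ bruhatLE cs (s i * a) (s i * b)) := by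
  induction n using Nat.strong_induction_on with
  | _ n ih =>
  constructor
  · -- subword property
    intro ω hlen hred σ hsub
    subst hlen
    cases ω with
    | nil =>
      rw [List.sublist_nil.mp hsub]
      exact ReflTransGen.refl
    | cons i ω' =>
      have hred' : cs.IsReduced ω' := by
        have := CoxeterSystem.IsReduced.drop (j := 1) hred
        simpa using this
      have hlred : ℓ (π ω') = ω'.length := hred'
      have hlfull : ℓ (π (i :: ω')) = ω'.length + 1 := by
        have h' := hred
        unfold CoxeterSystem.IsReduced at h'
        rw [h']
        simp
      have hlt : ℓ (π ω') < ℓ (s i * π ω') := by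
        rw [← cs.wordProd_cons]
        omega
      have hstep : bruhatLE cs (π ω') (π (i :: ω')) := by
        rw [cs.wordProd_cons]
        exact bruhat_step_left cs (cs.isReflection_simple i) hlt
      have hn' : ω'.length < (i :: ω').length := by
        rw [List.length_cons]; omega
      rcases List.sublist_cons_iff.mp hsub with hcase | ⟨σ', rfl, hσ'⟩
      · exact bruhat_trans cs ((ih ω'.length hn').1 ω' rfl hred' σ hcase) hstep
      · have h1 : bruhatLE cs (π σ') (π ω') := (ih ω'.length hn').1 ω' rfl hred' σ' hσ'
        have h2 := (ih ω'.length hn').2 (π ω') hlred i (π σ') h1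
        rw [cs.wordProd_cons, cs.wordProd_cons]
        rcases h2 with h | h
        · exact bruhat_trans cs h (by rw [← cs.wordProd_cons]; exact hstep)
        · exact h
  · -- lifting property
    intro b hlenb i a hab
    rcases ReflTransGen.cases_tail hab with rfl | ⟨b', hab', hstep⟩
    · right; exact ReflTransGen.refl
    obtain ⟨hl, t, ht, rfl⟩ := hstep
    have hb'b : bruhatLE cs b' (b' * t) := bruhat_step_right cs ht hl
    have hn' : ℓ b' < n := by omega
    rcases (ih (ℓ b') hn').2 b' rfl i a hab' with hPa | hPb
    · left; exact bruhat_trans cs hPa hb'b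
    rcases Nat.lt_or_ge (ℓ (s i * b')) (ℓ b') with hlt1 | hge1
    · -- s i * b' goes down: s i * b' ≤ b' ≤ b
      have hsb'b' : bruhatLE cs (s i * b') b' := by
        have h2 := bruhat_step_left cs (cs.isReflection_simple i) (x := s i * b')
          (by rw [cs.simple_mul_simple_cancel_left]; exact hlt1)
        rwa [cs.simple_mul_simple_cancel_left] at h2
      left
      exact bruhat_trans cs (bruhat_trans cs hPb hsb'b') hb'b
    have hgt1 : ℓ b' < ℓ (s i * b') :=
      lt_of_le_of_ne hge1 (fun h => cs.length_simple_mul_ne b' i h.symm)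
    rcases Nat.lt_or_ge (ℓ (s i * b')) (ℓ (s i * b' * t)) with hlt2 | hge2
    · -- step upward on the s-side
      right
      have : bruhatLE cs (s i * b') (s i * b' * t) := bruhat_step_right cs ht hlt2
      rw [mul_assoc] at this
      exact bruhat_trans cs hPb this
    have hgt2 : ℓ (s i * b' * t) < ℓ (s i * b') := by
      rcases Nat.lt_or_ge (ℓ (s i * b' * t)) (ℓ (s i * b')) with h | h
      · exact h
      · exfalso
        rcases Nat.eq_or_lt_of_le h with h' | h'
        · exact ht.length_mul_left_ne (s i * b') h'.symm
        · omega
    -- hard case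
    have hsb'len : ℓ (s i * b') = ℓ b' + 1 := by
      rcases cs.length_simple_mul b' i with h | h
      · exact h
      · omega
    have hsblt : ℓ (s i * (b' * t)) < ℓ (b' * t) := by
      rw [← mul_assoc]
      omega
    have hsblen : ℓ (s i * (b' * t)) + 1 = ℓ (b' * t) := by
      rcases cs.length_simple_mul (b' * t) i with h | h
      · omega
      · omega
    obtain ⟨ω₀, hω₀red, hω₀⟩ := cs.exists_reduced_word' (s i * (b' * t))
    have hω₀len : ω₀.length = ℓ (s i * (b' * t)) := hω₀red.symm ▸ (hω₀ ▸ rfl)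
    have hπω₁ : π (i :: ω₀) = b' * t := by
      rw [cs.wordProd_cons, ← hω₀, cs.simple_mul_simple_cancel_left]
    have hω₁red : cs.IsReduced (i :: ω₀) := by
      show ℓ (π (i :: ω₀)) = (i :: ω₀).length
      rw [hπω₁, List.length_cons, hω₀len]
      omega
    have hbt : π (i :: ω₀) * t = b' := by
      rw [hπω₁, mul_assoc, ht.mul_self, mul_one]
    have hexlt : ℓ (π (i :: ω₀) * t) < ℓ (π (i :: ω₀)) := by
      rw [hbt, hπω₁]
      omega
    obtain ⟨j, hj, hje⟩ := cs.strong_exchange_right (i :: ω₀) ht hexlt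
    rw [hbt] at hje
    match j, hj, hje with
    | 0, hj, hje =>
      -- b' = π ω₀ = s i * b, so s i * b' = b
      rw [List.eraseIdx_cons_zero, ← hω₀] at hje
      left
      have h3 : s i * b' = b' * t := by
        conv_lhs => rw [hje, cs.simple_mul_simple_cancel_left]
      rw [← h3]
      exact hPb
    | (j' + 1), hj, hje =>
      rw [List.eraseIdx_cons_succ, cs.wordProd_cons] at hje
      have hsib' : s i * b' = π (ω₀.eraseIdx j') := by
        rw [hje, cs.simple_mul_simple_cancel_left]
      have hsw : bruhatLE cs (π (ω₀.eraseIdx j')) (π ω₀) := by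
        have hm : ω₀.length < n := by omega
        exact (ih ω₀.length hm).1 ω₀ rfl hω₀red _ (ω₀.eraseIdx_sublist j')
      have hlast : bruhatLE cs (π ω₀) (b' * t) := by
        rw [← hω₀]
        have h2 := bruhat_step_left cs (cs.isReflection_simple i) (x := s i * (b' * t))
          (by rw [cs.simple_mul_simple_cancel_left]; exact hsblt)
        rwa [cs.simple_mul_simple_cancel_left] at h2
      left
      have hPb' : bruhatLE cs (s i * a) (π (ω₀.eraseIdx j')) := by
        rw [← hsib']; exact hPb
      exact bruhat_trans cs hPb' (bruhat_trans cs hsw hlast)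

end SWP

section Parabolic

open List Relation

variable (cs : CoxeterSystem M W) (I : Set B)

local prefix:100 "s" => cs.simple
local prefix:100 "π" => cs.wordProd
local prefix:100 "ℓ" => cs.length

theorem wordProd_mem_parabolic {ω : List B} (hω : ∀ b ∈ ω, b ∈ I) :
    π ω ∈ parabolic cs I := by
  induction ω with
  | nil => rw [cs.wordProd_nil]; exact Subgroup.one_mem _
  | cons i ω ih =>
    rw [cs.wordProd_cons]
    refine Subgroup.mul_mem _ ?_ (ih (fun b hb => hω b (List.mem_cons_of_mem i hb)))
    exact Subgroup.subset_closure ⟨i, hω i (List.mem_cons_self (a := i) (l := ω)), rfl⟩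

theorem exists_Iword {u : W} (hu : u ∈ parabolic cs I) :
    ∃ ω : List B, (∀ b ∈ ω, b ∈ I) ∧ π ω = u := by
  induction hu using Subgroup.closure_induction with
  | mem x hx =>
    obtain ⟨i, hi, rfl⟩ := hx
    exact ⟨[i], by simpa using hi, cs.wordProd_singleton i⟩
  | one => exact ⟨[], by simp, cs.wordProd_nil⟩
  | mul x y hx hy ihx ihy =>
    obtain ⟨ω₁, h1, rfl⟩ := ihx
    obtain ⟨ω₂, h2, rfl⟩ := ihy
    exact ⟨ω₁ ++ ω₂, by
      intro b hb
      rcases List.mem_append.mp hb with h | h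
      · exact h1 b h
      · exact h2 b h, cs.wordProd_append ω₁ ω₂⟩
  | inv x hx ihx =>
    obtain ⟨ω₁, h1, rfl⟩ := ihx
    exact ⟨ω₁.reverse, fun b hb => h1 b (List.mem_reverse.mp hb), cs.wordProd_reverse ω₁⟩

theorem exists_reduced_Iword {u : W} (hu : u ∈ parabolic cs I) :
    ∃ ω : List B, (∀ b ∈ ω, b ∈ I) ∧ cs.IsReduced ω ∧ π ω = u := by
  obtain ⟨ω, hω, rfl⟩ := exists_Iword cs I hu
  obtain ⟨σ, hsub, hred, hπ⟩ := exists_reduced_sublist cs ω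
  exact ⟨σ, fun b hb => hω b (hsub.subset hb), hred, hπ⟩

/-- Length additivity for a minimal length coset representative. -/
theorem length_mul_minCosetRep {ς : W} (hς : IsMinCosetRep cs I ς) :
    ∀ u ∈ parabolic cs I, ℓ (u * ς) = ℓ u + ℓ ς := by
  have aux : ∀ n (α : List B), α.length = n → (∀ b ∈ α, b ∈ I) → cs.IsReduced α →
      ℓ (π α * ς) = α.length + ℓ ς := by
    intro n
    induction n using Nat.strong_induction_on with
    | _ n ih =>
    intro α hlen hI hred
    subst hlen
    cases α with
    | nil => simp
    | cons i α' =>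
      have hred' : cs.IsReduced α' := by
        have := CoxeterSystem.IsReduced.drop (j := 1) hred
        simpa using this
      have hiI : i ∈ I := hI i (List.mem_cons_self (a := i) (l := α'))
      have hI' : ∀ b ∈ α', b ∈ I := fun b hb => hI b (List.mem_cons_of_mem i hb)
      have ihlen : ℓ (π α' * ς) = α'.length + ℓ ς :=
        ih α'.length (by rw [List.length_cons]; omega) α' rfl hI' hred'
      have hassoc : π (i :: α') * ς = s i * (π α' * ς) := by
        rw [cs.wordProd_cons, mul_assoc]
      rcases cs.length_simple_mul (π α' * ς) i with h | h
      · rw [hassoc, h, ihlen, List.length_cons]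
        omega
      · exfalso
        -- strong exchange
        obtain ⟨γ, hγred, hγ⟩ := cs.exists_reduced_word' ς
        have hγlen : γ.length = ℓ ς := hγred.symm ▸ (hγ ▸ rfl)
        have hπag : π (α' ++ γ) = π α' * ς := by rw [cs.wordProd_append, ← hγ]
        have hexlt : ℓ (s i * π (α' ++ γ)) < ℓ (π (α' ++ γ)) := by
          rw [hπag]
          omega
        obtain ⟨j, hj, hje⟩ := cs.strong_exchange_left (α' ++ γ)
          (cs.isReflection_simple i) hexlt
        rw [hπag] at hje
        rw [List.length_append] at hj
        rcases Nat.lt_or_ge j α'.length with hjlt | hjge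
        · -- deleted inside α' : contradicts reducedness of i :: α'
          rw [List.eraseIdx_append_of_lt_length hjlt] at hje
          have h2 : π (i :: α') * ς = π (α'.eraseIdx j) * ς := by
            rw [cs.wordProd_cons, mul_assoc]
            rw [hje, cs.wordProd_append, ← hγ]
          have h3 : π (i :: α') = π (α'.eraseIdx j) := mul_right_cancel h2
          have h4 : ℓ (π (i :: α')) = (i :: α').length := hred
          have h5 : ℓ (π (α'.eraseIdx j)) ≤ (α'.eraseIdx j).length :=
            cs.length_wordProd_le _
          have h6 : (α'.eraseIdx j).length + 1 = α'.length :=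
            List.length_eraseIdx_add_one hjlt
          rw [h3] at h4
          rw [List.length_cons] at h4
          omega
        · -- deleted inside γ : contradicts minimality of ς
          rw [List.eraseIdx_append_of_length_le hjge] at hje
          set j' := j - α'.length with hj'
          have hj'lt : j' < γ.length := by omega
          have hz : π (γ.eraseIdx j') = ((π α')⁻¹ * s i * π α') * ς := by
            have : s i * (π α' * ς) = π α' * π (γ.eraseIdx j') := by
              rw [hje, cs.wordProd_append]
            calc π (γ.eraseIdx j') = (π α')⁻¹ * (π α' * π (γ.eraseIdx j')) := by group
              _ = (π α')⁻¹ * (s i * (π α' * ς)) := by rw [this]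
              _ = ((π α')⁻¹ * s i * π α') * ς := by group
          have hzmem : (π α')⁻¹ * s i * π α' ∈ parabolic cs I := by
            refine Subgroup.mul_mem _ (Subgroup.mul_mem _ (Subgroup.inv_mem _ ?_) ?_) ?_
            · exact wordProd_mem_parabolic cs I hI'
            · exact Subgroup.subset_closure ⟨i, hiI, rfl⟩
            · exact wordProd_mem_parabolic cs I hI'
          have hmin := hς _ hzmem
          have h5 : ℓ (π (γ.eraseIdx j')) ≤ (γ.eraseIdx j').length :=
            cs.length_wordProd_le _
          have h6 : (γ.eraseIdx j').length + 1 = γ.length :=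
            List.length_eraseIdx_add_one hj'lt
          rw [hz] at h5
          omega
  intro u hu
  obtain ⟨α, hαI, hαred, rfl⟩ := exists_reduced_Iword cs I hu
  have := aux α.length α rfl hαI hαred
  rw [this, hαred]

end Parabolic

/-- For v, w ∈ W_I and ς the minimal length coset representative of W_I ς:
vς ≤ wς in Bruhat order if and only if v ≤ w. -/
theorem bruhatLE_mul_minCosetRep_iff (cs : CoxeterSystem M W) (I : Set B) (ς : W)
    (hς : IsMinCosetRep cs I ς) (v w : W)
    (hv : v ∈ parabolic cs I) (hw : w ∈ parabolic cs I) :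
    bruhatLE cs (v * ς) (w * ς) ↔ bruhatLE cs v w := by
  obtain ⟨γ, hγred, hγ⟩ := cs.exists_reduced_word' ς
  have hγlen : γ.length = cs.length ς := hγred.symm ▸ (hγ ▸ rfl)
  obtain ⟨ωw, hωwI, hωwred, hωwπ⟩ := exists_reduced_Iword cs I hw
  have hadd : cs.length (w * ς) = cs.length w + cs.length ς :=
    length_mul_minCosetRep cs I hς w hw
  have hπfull : cs.wordProd (ωw ++ γ) = w * ς := by
    rw [cs.wordProd_append, hωwπ, ← hγ]
  have hfullred : cs.IsReduced (ωw ++ γ) := by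
    show cs.length (cs.wordProd (ωw ++ γ)) = (ωw ++ γ).length
    rw [hπfull, hadd, List.length_append, hγlen]
    have : cs.length w = ωw.length := by rw [← hωwπ, hωwred]
    omega
  constructor
  · -- vς ≤ wς → v ≤ w
    intro h
    obtain ⟨τ, hτsub, hτred, hτπ⟩ :=
      exists_reduced_sublist_of_bruhatLE cs h (ωw ++ γ) hfullred hπfull
    obtain ⟨τ₁, τ₂, rfl, hτ₁, hτ₂⟩ := List.sublist_append_iff.mp hτsub
    have hu : cs.wordProd τ₁ ∈ parabolic cs I :=
      wordProd_mem_parabolic cs I (fun b hb => hωwI b (hτ₁.subset hb))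
    have hsplit : v * ς = cs.wordProd τ₁ * cs.wordProd τ₂ := by
      rw [← cs.wordProd_append, hτπ]
    have hz : cs.wordProd τ₂ = ((cs.wordProd τ₁)⁻¹ * v) * ς := by
      rw [mul_assoc, hsplit]; group
    have hzmem : (cs.wordProd τ₁)⁻¹ * v ∈ parabolic cs I :=
      Subgroup.mul_mem _ (Subgroup.inv_mem _ hu) hv
    have hmin := hς _ hzmem
    rw [← hz] at hmin
    have h1 : cs.length (cs.wordProd τ₂) ≤ τ₂.length := cs.length_wordProd_le τ₂
    have h2 : τ₂.length ≤ γ.length := hτ₂.length_le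
    have hτ₂len : τ₂.length = γ.length := by omega
    have hτ₂eq : τ₂ = γ := hτ₂.eq_of_length hτ₂len
    have hveq : v = cs.wordProd τ₁ := by
      have : cs.wordProd τ₂ = ς := by rw [hτ₂eq, ← hγ]
      rw [this] at hsplit
      exact mul_right_cancel hsplit
    have := (swp cs ωw.length).1 ωw rfl hωwred τ₁ hτ₁
    rw [← hveq, hωwπ] at this
    exact this
  · -- v ≤ w → vς ≤ wς
    intro h
    obtain ⟨σ, hσsub, hσred, hσπ⟩ :=
      exists_reduced_sublist_of_bruhatLE cs h ωw hωwred hωwπ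
    have hsub2 : (σ ++ γ).Sublist (ωw ++ γ) := hσsub.append (List.Sublist.refl γ)
    have := (swp cs (ωw ++ γ).length).1 (ωw ++ γ) rfl hfullred (σ ++ γ) hsub2
    rw [hπfull, cs.wordProd_append, hσπ, ← hγ] at this
    exact this
end

section
/- For a Coxeter group W with Bruhat order, Möbius inversion over Bruhat intervals holds: if I_w := Σ_{v ≤ w} (-1)^{ℓ(w)-ℓ(v)} G_v in the free ℤ-module with basis {G_v}_{v∈W}, then G_w = Σ_{v ≤ w} I_v. -/
open CoxeterSystem

variable {B W : Type*} [Group W] {M : CoxeterMatrix B}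

open CoxeterSystem List

namespace BruhatMobius

variable {B W : Type*} [Group W] {M : CoxeterMatrix B} (cs : CoxeterSystem M W)

local prefix:100 "s" => cs.simple
local prefix:100 "π" => cs.wordProd
local prefix:100 "ℓ" => cs.length
local prefix:100 "ris" => cs.rightInvSeq

open Classical

theorem simple_conj_cancel (i : B) (t : W) : s i * (s i * t * s i) * s i = t := by
  rw [← mul_assoc, ← mul_assoc, cs.simple_mul_simple_self, one_mul, mul_assoc,
    cs.simple_mul_simple_self, mul_one]

theorem simple_conj_eq_iff (i : B) (t : W) : s i * t * s i = s i ↔ t = s i := by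
  constructor
  · intro hc
    have h := congrArg (fun x => s i * x * s i) hc
    rw [simple_conj_cancel cs] at h
    rw [h, cs.simple_mul_simple_self, one_mul]
  · rintro rfl
    rw [cs.simple_mul_simple_self, one_mul]

noncomputable def sigmaPerm (i : B) : Equiv.Perm (W × ℤˣ) :=
  Function.Involutive.toPerm
    (fun p => (s i * p.1 * s i, if p.1 = s i then -p.2 else p.2))
    (by
      rintro ⟨t, e⟩
      by_cases h : t = s i
      · subst h
        simp [cs.simple_mul_simple_self, one_mul]
      · have h2 : s i * t * s i ≠ s i := fun hc => h ((simple_conj_eq_iff cs i t).mp hc)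
        simp [h, h2, simple_conj_cancel cs])

@[simp] theorem sigmaPerm_apply (i : B) (t : W) (e : ℤˣ) :
    sigmaPerm cs i (t, e) = (s i * t * s i, if t = s i then -e else e) := rfl

end BruhatMobius

namespace BruhatMobius
variable {B W : Type*} [Group W] {M : CoxeterMatrix B} (cs : CoxeterSystem M W)
local prefix:100 "s" => cs.simple
local prefix:100 "π" => cs.wordProd
local prefix:100 "ℓ" => cs.length
local prefix:100 "ris" => cs.rightInvSeq
open Classical

section Braid

variable (i j : B)

theorem sj_mul_a_base : s j * (s i * s j) = (s i * s j)⁻¹ * s j := by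
  rw [mul_inv_rev, cs.inv_simple, cs.inv_simple]
  group

theorem sj_mul_a (n : ℕ) :
    s j * (s i * s j) ^ n = ((s i * s j)⁻¹) ^ n * s j := by
  induction n with
  | zero => simp
  | succ n ih =>
    rw [pow_succ', ← mul_assoc, sj_mul_a_base cs i j, mul_assoc, ih, ← mul_assoc, ← pow_succ']

theorem sj_conj_eq_iff (j' : B) (x y : W) : s j' * x * s j' = y ↔ x = s j' * y * s j' := by
  constructor
  · intro h
    rw [← h, simple_conj_cancel cs]
  · intro h
    rw [h, simple_conj_cancel cs]

theorem conj_sj (k : ℕ) :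
    ((s i * s j)⁻¹) ^ k * s j * (s i * s j) ^ k = s j * (s i * s j) ^ (2 * k) := by
  rw [← sj_mul_a cs i j, mul_assoc, ← pow_add, two_mul]

private theorem conj_eq_iff' {G : Type*} [Group G] (g x y : G) :
    g ^ (k : ℕ) * x * (g⁻¹) ^ k = y ↔ x = (g⁻¹) ^ k * y * g ^ k := by
  rw [inv_pow]
  constructor
  · intro h
    rw [← h]
    group
  · intro h
    rw [h]
    group

theorem conj_sjsisj (k : ℕ) :
    ((s i * s j)⁻¹) ^ k * (s j * s i * s j) * (s i * s j) ^ k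
      = s j * (s i * s j) ^ (2 * k + 1) := by
  have h1 : ((s i * s j)⁻¹) ^ k * (s j * s i * s j) * (s i * s j) ^ k
      = (((s i * s j)⁻¹) ^ k * s j) * ((s i * s j) * (s i * s j) ^ k) := by
    simp only [mul_assoc]
  rw [h1, ← pow_succ', ← sj_mul_a cs i j, mul_assoc, ← pow_add]
  have h2 : k + (k + 1) = 2 * k + 1 := by omega
  rw [h2]

theorem sigma_iter (k : ℕ) (t : W) (e : ℤˣ) :
    ((sigmaPerm cs i * sigmaPerm cs j) ^ k) (t, e)
      = ((s i * s j) ^ k * t * ((s i * s j)⁻¹) ^ k,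
         e * (-1) ^ ((List.range (2 * k)).countP
              (fun n => decide (t = s j * (s i * s j) ^ n)))) := by
  induction k with
  | zero => simp
  | succ k ih =>
    rw [pow_succ', Equiv.Perm.mul_apply, ih]
    rw [Equiv.Perm.mul_apply, sigmaPerm_apply]
    set a := s i * s j with ha
    rw [sigmaPerm_apply]
    have hc1 : a ^ k * t * (a⁻¹) ^ k = s j ↔ t = s j * a ^ (2 * k) := by
      rw [conj_eq_iff', conj_sj cs i j]
    have hsji : s j * (a ^ k * t * (a⁻¹) ^ k) * s j = s i ↔ t = s j * a ^ (2 * k + 1) := by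
      rw [sj_conj_eq_iff cs j _ (s i), conj_eq_iff', conj_sjsisj cs i j]
    have hrange : (List.range (2 * (k + 1))) = List.range (2 * k) ++ [2 * k, 2 * k + 1] := by
      have h2 : 2 * (k + 1) = 2 * k + 2 := by ring
      rw [h2, List.range_add]
      simp [List.range_succ]
    rw [Prod.mk.injEq]
    constructor
    · show s i * (s j * (a ^ k * t * (a⁻¹) ^ k) * s j) * s i = a ^ (k+1) * t * (a⁻¹) ^ (k+1)
      have hainv : (a : W)⁻¹ = s j * s i := by
        rw [ha, mul_inv_rev, cs.inv_simple, cs.inv_simple]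
      rw [pow_succ' a k, pow_succ (a⁻¹) k, hainv, ha]
      simp only [mul_assoc]
    · rw [hrange, List.countP_append]
      simp only [hc1, hsji, List.countP_cons, List.countP_nil, decide_eq_true_eq]
      split_ifs <;>
        simp [pow_add, pow_succ, mul_neg, neg_mul, neg_neg, mul_comm, mul_assoc, mul_left_comm]

end Braid

end BruhatMobius

namespace BruhatMobius
variable {B W : Type*} [Group W] {M : CoxeterMatrix B} (cs : CoxeterSystem M W)
local prefix:100 "s" => cs.simple
local prefix:100 "π" => cs.wordProd
local prefix:100 "ℓ" => cs.length
local prefix:100 "ris" => cs.rightInvSeq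
open Classical

theorem sigma_liftable : M.IsLiftable (fun i => sigmaPerm cs i) := by
  intro i j
  apply Equiv.ext
  rintro ⟨t, e⟩
  rw [Equiv.Perm.one_apply]
  show ((sigmaPerm cs i * sigmaPerm cs j) ^ M i j) (t, e) = (t, e)
  rw [sigma_iter]
  have hM : (s i * s j) ^ (M i j) = 1 := cs.simple_mul_simple_pow i j
  rw [Prod.mk.injEq]
  constructor
  · rw [inv_pow, hM]
    simp
  · have hcount : (List.range (2 * M i j)).countP
        (fun n => decide (t = s j * (s i * s j) ^ n))
        = 2 * (List.range (M i j)).countP (fun n => decide (t = s j * (s i * s j) ^ n)) := by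
      rw [two_mul (M i j), List.range_add, List.countP_append, List.countP_map]
      have h2 : List.countP
          ((fun n => decide (t = s j * (s i * s j) ^ n)) ∘ fun x => M i j + x)
          (List.range (M i j))
          = List.countP (fun n => decide (t = s j * (s i * s j) ^ n))
            (List.range (M i j)) := by
        apply List.countP_congr
        intro x _
        simp only [Function.comp_apply, pow_add, hM, one_mul]
      rw [h2]
      omega
    rw [hcount, pow_mul]
    simp

noncomputable def Prep : W →* Equiv.Perm (W × ℤˣ) :=
  cs.lift ⟨fun i => sigmaPerm cs i, sigma_liftable cs⟩

theorem Prep_simple (i : B) : Prep cs (s i) = sigmaPerm cs i :=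
  cs.lift_apply_simple (sigma_liftable cs) i

theorem Prep_wordProd (ω : List B) (t : W) (e : ℤˣ) :
    Prep cs (π ω) (t, e) = (π ω * t * (π ω)⁻¹, e * (-1) ^ ((ris ω).count t)) := by
  induction ω with
  | nil => simp [wordProd_nil]
  | cons i ω ih =>
    rw [cs.wordProd_cons, map_mul, Equiv.Perm.mul_apply, ih, Prep_simple, sigmaPerm_apply]
    have hris : ris (i :: ω) = ((π ω)⁻¹ * s i * π ω) :: ris ω := rfl
    rw [hris, List.count_cons]
    rw [Prod.mk.injEq]
    constructor
    · simp only [mul_inv_rev, cs.inv_simple, mul_assoc]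
    · have hcond : π ω * t * (π ω)⁻¹ = s i ↔ t = (π ω)⁻¹ * s i * π ω := by
        constructor
        · intro h
          rw [← h]
          group
        · intro h
          rw [h]
          group
      by_cases h : t = (π ω)⁻¹ * s i * π ω
      · have hb : ((π ω)⁻¹ * s i * π ω == t) = true := beq_iff_eq.mpr h.symm
        rw [if_pos (hcond.mpr h), if_pos hb, pow_add, pow_one]
        simp [mul_neg, neg_neg, mul_comm, mul_left_comm, mul_assoc]
      · have hb : ¬(((π ω)⁻¹ * s i * π ω == t) = true) := by
          simp only [beq_iff_eq]
          exact fun hc => h hc.symm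
        rw [if_neg (fun hc => h (hcond.mp hc)), if_neg hb]
        simp

noncomputable def eta (w t : W) : ℤˣ := ((Prep cs w) (t, 1)).2

theorem eta_eq (ω : List B) (t : W) : eta cs (π ω) t = (-1) ^ ((ris ω).count t) := by
  rw [eta, Prep_wordProd]
  simp

theorem Prep_apply (w t : W) (e : ℤˣ) :
    Prep cs w (t, e) = (w * t * w⁻¹, e * eta cs w t) := by
  obtain ⟨ω, _, rfl⟩ := cs.exists_reduced_word' w
  rw [Prep_wordProd, eta_eq]

theorem eta_mul (x y t : W) :
    eta cs (x * y) t = eta cs y t * eta cs x (y * t * y⁻¹) := by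
  unfold eta
  rw [map_mul, Equiv.Perm.mul_apply, Prep_apply, Prep_apply]
  simp only [one_mul]
  have h2 : (((Prep cs) x) (y * t * y⁻¹, 1)).2 = eta cs x (y * t * y⁻¹) := rfl
  rw [mul_comm, h2]
  exact mul_comm _ _

end BruhatMobius

namespace BruhatMobius
variable {B W : Type*} [Group W] {M : CoxeterMatrix B} (cs : CoxeterSystem M W)
local prefix:100 "s" => cs.simple
local prefix:100 "π" => cs.wordProd
local prefix:100 "ℓ" => cs.length
local prefix:100 "ris" => cs.rightInvSeq
open Classical

theorem neg_one_pow_eq_neg_one_iff_odd {c : ℕ} (h : ((-1 : ℤˣ)) ^ c = -1) : Odd c := by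
  rcases Nat.even_or_odd c with he | ho
  · rw [Even.neg_one_pow he] at h
    exact absurd h (by decide)
  · exact ho

theorem eta_self_aux (υ : List B) (i : B) :
    eta cs (π υ * s i * (π υ)⁻¹) (π υ * s i * (π υ)⁻¹) = -1 := by
  induction υ with
  | nil =>
    simp only [wordProd_nil, one_mul, inv_one, mul_one]
    have h : (s i) = π [i] := (cs.wordProd_singleton i).symm
    rw [h, eta_eq]
    have hris : ris [i] = [s i] := by
      simp [CoxeterSystem.rightInvSeq, wordProd_nil]
    rw [hris, ← h]
    simp [List.count_cons]
  | cons j υ ih =>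
    set t' := π υ * s i * (π υ)⁻¹ with ht'
    have hw : π (j :: υ) * s i * (π (j :: υ))⁻¹ = s j * t' * s j := by
      rw [cs.wordProd_cons, ht']
      simp only [mul_inv_rev, cs.inv_simple, mul_assoc]
    rw [hw]
    have hconv : (s j * t' * s j = s j) ↔ (t' = s j) := by
      rw [sj_conj_eq_iff cs j]
      constructor
      · intro h
        rw [h, cs.simple_mul_simple_self, one_mul]
      · intro h
        rw [h, cs.simple_mul_simple_self, one_mul]
    have h1 : s j * (s j * t' * s j) * s j = t' := simple_conj_cancel cs j _
    have htt : t' * t' * t'⁻¹ = t' := by group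
    show ((Prep cs (s j * t' * s j)) (s j * t' * s j, 1)).2 = -1
    have key : (Prep cs (s j * t' * s j)) (s j * t' * s j, 1)
        = Prep cs (s j) (Prep cs t' (Prep cs (s j) (s j * t' * s j, 1))) := by
      rw [map_mul, map_mul]
      rfl
    rw [key]
    by_cases h : t' = s j
    · have e1 : Prep cs (s j) (s j * t' * s j, 1) = (t', -1) := by
        rw [Prep_simple, sigmaPerm_apply, if_pos (hconv.mpr h), h1]
      have e2 : Prep cs t' (t', -1) = (t', 1) := by
        rw [Prep_apply, ih, htt]
        norm_num
      rw [e1, e2, Prep_simple, sigmaPerm_apply, if_pos h]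
    · have e1 : Prep cs (s j) (s j * t' * s j, 1) = (t', 1) := by
        rw [Prep_simple, sigmaPerm_apply, if_neg (fun hc => h (hconv.mp hc)), h1]
      have e2 : Prep cs t' (t', 1) = (t', -1) := by
        rw [Prep_apply, ih, htt]
        norm_num
      rw [e1, e2, Prep_simple, sigmaPerm_apply, if_neg h]

theorem eta_self {t : W} (ht : cs.IsReflection t) : eta cs t t = -1 := by
  obtain ⟨w, i, rfl⟩ := ht
  obtain ⟨υ, _, rfl⟩ := cs.exists_reduced_word' w
  exact eta_self_aux cs υ i

theorem eta_mul_refl {t : W} (ht : cs.IsReflection t) (w : W) :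
    eta cs (w * t) t = - eta cs w t := by
  rw [eta_mul]
  have h : t * t * t⁻¹ = t := by group
  rw [h, eta_self cs ht]
  simp [mul_comm]

theorem eta_neg_of_isRightInversion {t : W} (w : W)
    (hinv : cs.IsRightInversion w t) : eta cs w t = -1 := by
  rcases Int.units_eq_one_or (eta cs w t) with h1 | h1
  · exfalso
    have h2 : eta cs (w * t) t = -1 := by
      rw [eta_mul_refl cs hinv.1, h1]
    obtain ⟨ω, hred, hw⟩ := cs.exists_reduced_word' (w * t)
    rw [hw, eta_eq] at h2
    have hmem : t ∈ ris ω :=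
      List.count_pos_iff.mp (neg_one_pow_eq_neg_one_iff_odd h2).pos
    have hri := cs.isRightInversion_of_mem_rightInvSeq hred hmem
    rw [← hw] at hri
    have h3 : w * t * t = w := by
      rw [mul_assoc, hinv.1.mul_self, mul_one]
    have h4 := hri.2
    rw [h3] at h4
    have h5 := hinv.2
    omega
  · exact h1

theorem isRightInversion_of_eta_neg {t : W} (ht : cs.IsReflection t) (w : W)
    (h1 : eta cs w t = -1) : cs.IsRightInversion w t := by
  obtain ⟨ω, hred, hw⟩ := cs.exists_reduced_word' w
  rw [hw, eta_eq] at h1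
  have hmem : t ∈ ris ω :=
    List.count_pos_iff.mp (neg_one_pow_eq_neg_one_iff_odd h1).pos
  have := cs.isRightInversion_of_mem_rightInvSeq hred hmem
  rwa [← hw] at this

theorem strong_exchange (ω : List B) {t : W} (ht : cs.IsReflection t)
    (hlt : ℓ (π ω * t) < ℓ (π ω)) :
    ∃ j < ω.length, π (ω.eraseIdx j) = π ω * t := by
  have heta : eta cs (π ω) t = -1 := eta_neg_of_isRightInversion cs (π ω) ⟨ht, hlt⟩
  rw [eta_eq] at heta
  have hmem : t ∈ ris ω :=
    List.count_pos_iff.mp (neg_one_pow_eq_neg_one_iff_odd heta).pos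
  obtain ⟨j, hj, hget⟩ := List.mem_iff_getElem.mp hmem
  rw [cs.length_rightInvSeq] at hj
  refine ⟨j, hj, ?_⟩
  rw [← cs.wordProd_mul_getD_rightInvSeq ω j]
  congr 1
  rw [List.getD_eq_getElem _ 1 (by rw [cs.length_rightInvSeq]; exact hj), hget]

end BruhatMobius

namespace BruhatMobius
variable {B W : Type*} [Group W] {M : CoxeterMatrix B} (cs : CoxeterSystem M W)
local prefix:100 "s" => cs.simple
local prefix:100 "π" => cs.wordProd
local prefix:100 "ℓ" => cs.length
local prefix:100 "ris" => cs.rightInvSeq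
open Classical

theorem bruhatLE.refl (w : W) : bruhatLE cs w w := Relation.ReflTransGen.refl

theorem bruhatLE.trans {u v w : W} (h1 : bruhatLE cs u v) (h2 : bruhatLE cs v w) :
    bruhatLE cs u w := Relation.ReflTransGen.trans h1 h2

theorem bruhatLE.length_le {v w : W} (h : bruhatLE cs v w) : ℓ v ≤ ℓ w := by
  induction h with
  | refl => exact le_refl _
  | tail _ hbc ih => exact le_of_lt (lt_of_le_of_lt ih hbc.1)

theorem bruhatLE.eq_of_length_ge {v w : W} (h : bruhatLE cs v w) (hl : ℓ w ≤ ℓ v) :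
    v = w := by
  cases h with
  | refl => rfl
  | tail hab hbc =>
    exfalso
    have := (bruhatLE.length_le cs hab)
    have := hbc.1
    omega

theorem le_mul_of_lt {w t : W} (ht : cs.IsReflection t) (h : ℓ w < ℓ (w * t)) :
    bruhatLE cs w (w * t) :=
  Relation.ReflTransGen.single ⟨h, t, ht, rfl⟩

theorem mul_le_of_lt {w t : W} (ht : cs.IsReflection t) (h : ℓ (w * t) < ℓ w) :
    bruhatLE cs (w * t) w := by
  have hw : w = (w * t) * t := by
    rw [mul_assoc, ht.mul_self, mul_one]
  nth_rewrite 2 [hw]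
  exact Relation.ReflTransGen.single ⟨by rw [← hw]; exact h, t, ht, rfl⟩

/-- One-step lifting auxiliary. -/
theorem step_lift (i : B) {u t : W} (ht : cs.IsReflection t)
    (hlen : ℓ u < ℓ (u * t)) :
    bruhatLE cs (u * s i) (u * t * s i) ∨ bruhatLE cs (u * s i) (u * t) := by
  rcases lt_or_gt_of_ne (cs.length_mul_simple_ne u i) with hus | hus
  · -- ℓ (u * s i) < ℓ u
    right
    exact bruhatLE.trans cs (mul_le_of_lt cs (cs.isReflection_simple i) hus)
      (le_mul_of_lt cs ht hlen)
  · -- ℓ u < ℓ (u * s i)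
    have ht' : cs.IsReflection (s i * t * s i) := by
      have := ht.conj (s i)
      rwa [cs.inv_simple] at this
    have hkey : (u * s i) * (s i * t * s i) = u * t * s i := by
      simp only [mul_assoc, cs.simple_mul_simple_cancel_left]
    rcases lt_or_gt_of_ne (ht'.length_mul_left_ne (u * s i)) with h2 | h2
    · -- ℓ (u * s i * (s i * t * s i)) < ℓ (u * s i), i.e. ℓ (u t s i) < ℓ (u s i)
      rw [hkey] at h2
      -- strong exchange on the reduced word for u * s i
      obtain ⟨υ, hυlen, hυ⟩ := cs.exists_reduced_word u
      have hπ : π (υ ++ [i]) = u * s i := by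
        rw [cs.wordProd_append, cs.wordProd_singleton, ← hυ]
      have hse := strong_exchange cs (υ ++ [i]) ht'
        (by rw [hπ, hkey]; exact h2)
      rw [hπ, hkey] at hse
      obtain ⟨j, hj, hej⟩ := hse
      rw [List.length_append, List.length_singleton] at hj
      rcases Nat.lt_succ_iff_lt_or_eq.mp hj with hjlt | hjeq
      · exfalso
        rw [List.eraseIdx_append_of_lt_length hjlt [i]] at hej
        rw [cs.wordProd_append, cs.wordProd_singleton] at hej
        have hueq : π (υ.eraseIdx j) = u * t := by
          have := congrArg (fun x => x * s i) hej
          simpa [mul_assoc, cs.simple_mul_simple_cancel_right] using this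
        have hlen2 : ℓ (u * t) ≤ (υ.eraseIdx j).length := by
          rw [← hueq]
          exact cs.length_wordProd_le _
        have hle : (υ.eraseIdx j).length + 1 = υ.length :=
          List.length_eraseIdx_add_one hjlt
        have := hυlen.eq
        rw [← hυ] at this
        omega
      · -- j = υ.length : erased the last letter
        right
        rw [hjeq] at hej
        have her : (υ ++ [i]).eraseIdx υ.length = υ := by
          rw [List.eraseIdx_append_of_length_le (le_refl _)]
          simp
        rw [her, ← hυ] at hej
        -- hej : u = u * t * s i so u * s i = u * t
        have : u * s i = u * t := by
          have := congrArg (fun x => x * s i) hej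
          simpa [mul_assoc, cs.simple_mul_simple_cancel_right] using this
        rw [this]
        exact bruhatLE.refl cs _
    · -- ℓ (u * s i) < ℓ (u * t * s i)
      left
      rw [← hkey]
      exact le_mul_of_lt cs ht' h2

end BruhatMobius

namespace BruhatMobius
variable {B W : Type*} [Group W] {M : CoxeterMatrix B} (cs : CoxeterSystem M W)
local prefix:100 "s" => cs.simple
local prefix:100 "π" => cs.wordProd
local prefix:100 "ℓ" => cs.length
local prefix:100 "ris" => cs.rightInvSeq
open Classical

theorem lift_aux {u x : W} (h : bruhatLE cs u x) (i : B) (hx : ℓ x < ℓ (x * s i)) :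
    bruhatLE cs (u * s i) (x * s i) ∧ bruhatLE cs u (x * s i) := by
  induction h using Relation.ReflTransGen.head_induction_on with
  | refl => exact ⟨bruhatLE.refl cs _, le_mul_of_lt cs (cs.isReflection_simple i) hx⟩
  | head hab _ ih =>
    obtain ⟨hlen, t, ht, rfl⟩ := hab
    constructor
    · rcases step_lift cs i ht hlen with h1 | h1
      · exact bruhatLE.trans cs h1 ih.1
      · exact bruhatLE.trans cs h1 ih.2
    · exact bruhatLE.trans cs (Relation.ReflTransGen.single ⟨hlen, t, ht, rfl⟩) ih.2

theorem wordProd_sublist_le {τ ω : List B} (hsub : τ <+ ω) (hred : cs.IsReduced ω) :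
    bruhatLE cs (π τ) (π ω) := by
  induction ω using List.reverseRecOn generalizing τ with
  | nil =>
    rw [List.sublist_nil.mp hsub]
    exact bruhatLE.refl cs _
  | append_singleton l a ih =>
    have hredl : cs.IsReduced l := by
      have := hred.take l.length
      rwa [List.take_left] at this
    have hlt : ℓ (π l) < ℓ (π l * s a) := by
      have h1 : ℓ (π (l ++ [a])) = l.length + 1 := by
        rw [hred]
        simp
      rw [cs.wordProd_append, cs.wordProd_singleton] at h1
      rw [h1, hredl]
      omega
    obtain ⟨τ₁, τ₂, rfl, hsub1, hsub2⟩ := List.sublist_append_iff.mp hsub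
    rcases List.sublist_singleton.mp hsub2 with rfl | rfl
    · rw [List.append_nil, cs.wordProd_append, cs.wordProd_singleton]
      exact bruhatLE.trans cs (ih hsub1 hredl)
        (le_mul_of_lt cs (cs.isReflection_simple a) hlt)
    · rw [cs.wordProd_append, cs.wordProd_singleton, cs.wordProd_append,
        cs.wordProd_singleton]
      exact (lift_aux cs (ih hsub1 hredl) a hlt).1

theorem exists_reduced_sublist (ω : List B) :
    ∃ τ, τ.Sublist ω ∧ cs.IsReduced τ ∧ π τ = π ω := by
  generalize hn : ω.length = n
  induction n using Nat.strong_induction_on generalizing ω with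
  | _ n ihn =>
  by_cases hred : cs.IsReduced ω
  · exact ⟨ω, List.Sublist.refl ω, hred, rfl⟩
  · -- find a descent position
    have hlen : ℓ (π ω) ≠ ω.length := hred
    have hstep : ∃ k < ω.length, ℓ (π (ω.take (k+1))) < ℓ (π (ω.take k)) := by
      by_contra hcon
      push_neg at hcon
      have hall : ∀ k ≤ ω.length, ℓ (π (ω.take k)) = k := by
        intro k hk
        induction k with
        | zero => simp
        | succ m ihm =>
          have hm : m < ω.length := by omega
          have h1 : ω.take (m+1) = ω.take m ++ [ω[m]] := by
            rw [List.take_succ]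
            simp [List.getElem?_eq_getElem hm]
          have h2 : π (ω.take (m+1)) = π (ω.take m) * s (ω[m]) := by
            rw [h1, cs.wordProd_append, cs.wordProd_singleton]
          have h3 := hcon m hm
          have h4 := ihm (by omega)
          rcases cs.length_mul_simple (π (ω.take m)) ω[m] with h5 | h5
          · rw [h2, h5, h4]
          · rw [h2] at h3 ⊢
            omega
      have := hall ω.length (le_refl _)
      rw [List.take_length] at this
      exact hlen this
    obtain ⟨k, hk, hdesc⟩ := hstep
    have h1 : ω.take (k+1) = ω.take k ++ [ω[k]] := by
      rw [List.take_succ]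
      simp [List.getElem?_eq_getElem hk]
    have h2 : π (ω.take (k+1)) = π (ω.take k) * s (ω[k]) := by
      rw [h1, cs.wordProd_append, cs.wordProd_singleton]
    rw [h2] at hdesc
    obtain ⟨j, hj, hej⟩ := strong_exchange cs (ω.take k) (cs.isReflection_simple ω[k]) hdesc
    rw [List.length_take] at hj
    have hjk : j < k := lt_of_lt_of_le hj (min_le_left _ _)
    set ω₂ := (ω.take k).eraseIdx j ++ ω.drop (k+1) with hω₂
    have hπ2 : π ω₂ = π ω := by
      rw [hω₂, cs.wordProd_append, hej, ← h2]
      rw [← cs.wordProd_append, List.take_append_drop]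
    have hsub2 : ω₂.Sublist ω := by
      have hA : ((ω.take k).eraseIdx j).Sublist (ω.take (k+1)) := by
        apply List.Sublist.trans (List.eraseIdx_sublist _ j)
        rw [show ω.take k = (ω.take (k+1)).take k by rw [List.take_take]; congr 1; omega]
        exact List.take_sublist _ _
      have hB : (ω.drop (k+1)).Sublist (ω.drop (k+1)) := List.Sublist.refl _
      calc ω₂ = (ω.take k).eraseIdx j ++ ω.drop (k+1) := rfl
        _ <+ ω.take (k+1) ++ ω.drop (k+1) := List.Sublist.append hA hB
        _ = ω := List.take_append_drop _ _
    have hlen2 : ω₂.length < n := by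
      have hkl : (ω.take k).length = k := by
        rw [List.length_take]
        omega
      have : ((ω.take k).eraseIdx j).length + 1 = k := by
        rw [List.length_eraseIdx_add_one (by rw [hkl]; exact hjk)]
        exact hkl
      rw [hω₂, List.length_append, List.length_drop]
      omega
    obtain ⟨τ, hτsub, hτred, hτπ⟩ := ihn ω₂.length hlen2 ω₂ rfl
    exact ⟨τ, hτsub.trans hsub2, hτred, by rw [hτπ, hπ2]⟩

theorem exists_reduced_sublist_of_le {v w : W} (h : bruhatLE cs v w) {ω : List B}
    (hred : cs.IsReduced ω) (hw : w = π ω) :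
    ∃ τ, τ.Sublist ω ∧ cs.IsReduced τ ∧ π τ = v := by
  induction h using Relation.ReflTransGen.head_induction_on with
  | refl => exact ⟨ω, List.Sublist.refl ω, hred, hw.symm⟩
  | @head a b hab _ ih =>
    obtain ⟨τb, hsubb, hredb, hπb⟩ := ih
    obtain ⟨hlen, t, ht, rfl⟩ := hab
    have ha : a * t * t = a := by rw [mul_assoc, ht.mul_self, mul_one]
    have hlt : ℓ (π τb * t) < ℓ (π τb) := by
      rw [hπb, ha]
      exact hlen
    obtain ⟨j, hj, hej⟩ := strong_exchange cs τb ht hlt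
    obtain ⟨τ, hτsub, hτred, hτπ⟩ := exists_reduced_sublist cs (τb.eraseIdx j)
    refine ⟨τ, hτsub.trans ((List.eraseIdx_sublist τb j).trans hsubb), hτred, ?_⟩
    rw [hτπ, hej, hπb, ha]

/-- The key lemma: if `s i` is a right descent of `w`, then
`v ≤ w ↔ (v ≤ w * s i ∨ v * s i ≤ w * s i)`. -/
theorem le_iff_of_descent {w : W} {i : B} (hd : ℓ (w * s i) < ℓ w) (v : W) :
    bruhatLE cs v w ↔
      (bruhatLE cs v (w * s i) ∨ bruhatLE cs (v * s i) (w * s i)) := by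
  obtain ⟨ω', hred', hw'⟩ := cs.exists_reduced_word' (w * s i)
  have hπω : π (ω' ++ [i]) = w := by
    rw [cs.wordProd_append, cs.wordProd_singleton, ← hw', mul_assoc,
      cs.simple_mul_simple_self, mul_one]
  have hlw : ℓ w = ℓ (w * s i) + 1 := by
    rcases cs.length_mul_simple w i with h | h
    · omega
    · omega
  have hredω : cs.IsReduced (ω' ++ [i]) := by
    show ℓ (π (ω' ++ [i])) = _
    rw [hπω, List.length_append, List.length_singleton, hlw, ← hred', hw']
  constructor
  · intro h
    obtain ⟨τ, hsub, hτred, hτπ⟩ := exists_reduced_sublist_of_le cs h hredω hπω.symm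
    obtain ⟨τ₁, τ₂, rfl, hsub1, hsub2⟩ := List.sublist_append_iff.mp hsub
    rcases List.sublist_singleton.mp hsub2 with rfl | rfl
    · left
      rw [List.append_nil] at hτπ
      rw [← hτπ, hw']
      exact wordProd_sublist_le cs hsub1 hred'
    · right
      rw [cs.wordProd_append, cs.wordProd_singleton] at hτπ
      have : v * s i = π τ₁ := by
        rw [← hτπ, mul_assoc, cs.simple_mul_simple_self, mul_one]
      rw [this, hw']
      exact wordProd_sublist_le cs hsub1 hred'
  · rintro (h | h)
    · exact bruhatLE.trans cs h (mul_le_of_lt cs (cs.isReflection_simple i) hd)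
    · obtain ⟨τ, hsub, hτred, hτπ⟩ := exists_reduced_sublist_of_le cs h hred' hw'
      have hsub2 : (τ ++ [i]).Sublist (ω' ++ [i]) :=
        List.Sublist.append hsub (List.Sublist.refl _)
      have hπ2 : π (τ ++ [i]) = v := by
        rw [cs.wordProd_append, cs.wordProd_singleton, hτπ, mul_assoc,
          cs.simple_mul_simple_self, mul_one]
      rw [← hπ2, ← hπω]
      exact wordProd_sublist_le cs hsub2 hredω

end BruhatMobius

namespace BruhatMobius
variable {B W : Type*} [Group W] {M : CoxeterMatrix B} (cs : CoxeterSystem M W)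
local prefix:100 "s" => cs.simple
local prefix:100 "π" => cs.wordProd
local prefix:100 "ℓ" => cs.length
open Classical

private theorem neg_pow_cancel {a b : ℕ} (h : b = a + 1 ∨ b + 1 = a) :
    (-1 : ℤ) ^ a + (-1) ^ b = 0 := by
  rcases h with rfl | h
  · rw [pow_succ]
    ring
  · obtain rfl : a = b + 1 := h.symm
    rw [pow_succ]
    ring

theorem mobius_aux (hfin : ∀ w : W, {v | bruhatLE cs v w}.Finite) :
    ∀ n : ℕ, ∀ w u : W, ℓ w = n →
      (∑ v ∈ (hfin w).toFinset.filter (fun v => bruhatLE cs u v), (-1 : ℤ) ^ (ℓ v))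
        = if u = w then (-1 : ℤ) ^ (ℓ w) else 0 := by
  have hmem : ∀ (w v : W), v ∈ (hfin w).toFinset ↔ bruhatLE cs v w := by
    intro w v
    rw [Set.Finite.mem_toFinset]
    rfl
  intro n
  induction n using Nat.strong_induction_on with
  | _ n ihn =>
  intro w u hw
  by_cases hone : w = 1
  · subst hone
    have hsub : ∀ v, v ∈ (hfin 1).toFinset.filter (fun v => bruhatLE cs u v) ↔
        (v = 1 ∧ u = 1) := by
      intro v
      rw [Finset.mem_filter, hmem]
      constructor
      · rintro ⟨h1, h2⟩
        have hv1 : v = 1 := by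
          have := bruhatLE.length_le cs h1
          rw [cs.length_one] at this
          exact cs.length_eq_zero_iff.mp (by omega)
        subst hv1
        have hu1 : u = 1 := by
          have := bruhatLE.length_le cs h2
          rw [cs.length_one] at this
          exact cs.length_eq_zero_iff.mp (by omega)
        exact ⟨rfl, hu1⟩
      · rintro ⟨rfl, rfl⟩
        exact ⟨bruhatLE.refl cs 1, bruhatLE.refl cs 1⟩
    by_cases hu : u = 1
    · subst hu
      have : (hfin 1).toFinset.filter (fun v => bruhatLE cs 1 v) = {1} := by
        apply Finset.ext
        intro v
        rw [Finset.mem_singleton]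
        constructor
        · intro h
          exact ((hsub v).mp h).1
        · rintro rfl
          exact (hsub 1).mpr ⟨rfl, rfl⟩
      rw [this]
      simp
    · have : (hfin 1).toFinset.filter (fun v => bruhatLE cs u v) = ∅ := by
        apply Finset.eq_empty_of_forall_notMem
        intro v hv
        exact hu ((hsub v).mp hv).2
      rw [this, if_neg hu]
      simp
  · obtain ⟨i, hdesc⟩ := cs.exists_rightDescent_of_ne_one hone
    have hdesc : ℓ (w * s i) < ℓ w := hdesc
    have hlw : ℓ w = ℓ (w * s i) + 1 := by
      rcases cs.length_mul_simple w i with h | h <;> omega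
    -- abbreviations
    set w' := w * s i with hw'
    have hw'w : bruhatLE cs w' w := mul_le_of_lt cs (cs.isReflection_simple i) hdesc
    have hL1 : ∀ v, bruhatLE cs v w ↔
        (bruhatLE cs v w' ∨ bruhatLE cs (v * s i) w') := le_iff_of_descent cs hdesc
    have hIH : ∀ u' : W,
        (∑ v ∈ (hfin w').toFinset.filter (fun v => bruhatLE cs u' v), (-1 : ℤ) ^ (ℓ v))
          = if u' = w' then (-1 : ℤ) ^ (ℓ w') else 0 := by
      intro u'
      exact ihn (ℓ w') (by omega) w' u' rfl
    rcases lt_or_gt_of_ne (cs.length_mul_simple_ne u i).symm with hu | hu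
    · -- Case A : ℓ u < ℓ (u * s i) ; the sum vanishes by the involution v ↦ v * s i
      have hune : u ≠ w := by
        intro hc
        subst hc
        rw [hw'] at hdesc
        omega
      rw [if_neg hune]
      apply Finset.sum_involution (g := fun v _ => v * s i)
      · -- sum of pairs is zero
        intro v _
        exact neg_pow_cancel (cs.length_mul_simple v i)
      · -- no fixed points
        intro v _ _
        intro hc
        exact cs.length_mul_simple_ne v i (by rw [hc])
      · -- membership preserved
        intro v hv
        rw [Finset.mem_filter, hmem] at hv ⊢
        obtain ⟨hv2, hv1⟩ := hv
        constructor
        · -- v * s i ≤ w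
          rw [hL1]
          rcases (hL1 v).mp hv2 with h | h
          · right
            rwa [cs.simple_mul_simple_cancel_right]
          · left
            exact h
        · -- u ≤ v * s i
          rcases cs.length_mul_simple v i with h | h
          · -- v < v * s i
            exact bruhatLE.trans cs hv1
              (le_mul_of_lt cs (cs.isReflection_simple i) (by omega))
          · -- v * s i < v : use L1 at v
            have hvd : ℓ (v * s i) < ℓ v := by omega
            rcases (le_iff_of_descent cs hvd u).mp hv1 with h2 | h2
            · exact h2
            · exact bruhatLE.trans cs
                (le_mul_of_lt cs (cs.isReflection_simple i) hu) h2
      · -- involution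
        intro v _
        exact cs.simple_mul_simple_cancel_right i
    · -- Case B : ℓ (u * s i) < ℓ u
      have huu' : bruhatLE cs (u * s i) u := mul_le_of_lt cs (cs.isReflection_simple i) hu
      -- split the sum according to whether v ≤ w'
      rw [← Finset.sum_filter_add_sum_filter_not
        ((hfin w).toFinset.filter (fun v => bruhatLE cs u v)) (fun v => bruhatLE cs v w')]
      -- first summand is the sum over [u, w']
      have hA : ((hfin w).toFinset.filter (fun v => bruhatLE cs u v)).filter
            (fun v => bruhatLE cs v w')
          = (hfin w').toFinset.filter (fun v => bruhatLE cs u v) := by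
        apply Finset.ext
        intro v
        simp only [Finset.mem_filter, hmem]
        constructor
        · rintro ⟨⟨h1, h2⟩, h3⟩
          exact ⟨h3, h2⟩
        · rintro ⟨h1, h2⟩
          exact ⟨⟨bruhatLE.trans cs h1 hw'w, h2⟩, h1⟩
      rw [hA, hIH u]
      -- second summand
      set Bset := (((hfin w).toFinset.filter (fun v => bruhatLE cs u v)).filter
        (fun v => ¬ bruhatLE cs v w')) with hBset
      set Gset := (((hfin w').toFinset.filter (fun v => bruhatLE cs (u * s i) v)).filter
        (fun x => ¬ bruhatLE cs (x * s i) w')) with hGset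
      have hBmem : ∀ v, v ∈ Bset ↔
          bruhatLE cs u v ∧ bruhatLE cs v w ∧ ¬ bruhatLE cs v w' := by
        intro v
        rw [hBset]
        simp only [Finset.mem_filter, hmem]
        tauto
      have hGmem : ∀ x, x ∈ Gset ↔
          bruhatLE cs (u * s i) x ∧ bruhatLE cs x w' ∧ ¬ bruhatLE cs (x * s i) w' := by
        intro x
        rw [hGset]
        simp only [Finset.mem_filter, hmem]
        tauto
      have hBG : ∀ v ∈ Bset, v * s i ∈ Gset := by
        intro v hv
        rw [hBmem] at hv
        obtain ⟨hv1, hv2, hv3⟩ := hv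
        have hvs : bruhatLE cs (v * s i) w' := by
          rcases (hL1 v).mp hv2 with h | h
          · exact absurd h hv3
          · exact h
        have hvslt : ℓ (v * s i) < ℓ v := by
          rcases cs.length_mul_simple v i with h | h
          · exfalso
            apply hv3
            exact bruhatLE.trans cs
              (bruhatLE.trans cs (le_mul_of_lt cs (cs.isReflection_simple i) (by omega))
                (bruhatLE.refl cs _)) hvs
          · omega
        rw [hGmem]
        refine ⟨?_, hvs, ?_⟩
        · -- u * s i ≤ v * s i
          rcases (le_iff_of_descent cs hvslt u).mp hv1 with h | h
          · exact bruhatLE.trans cs huu' h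
          · exact h
        · rwa [cs.simple_mul_simple_cancel_right]
      have hGB : ∀ x ∈ Gset, x * s i ∈ Bset := by
        intro x hx
        rw [hGmem] at hx
        obtain ⟨hx1, hx2, hx3⟩ := hx
        have hxlt : ℓ x < ℓ (x * s i) := by
          rcases cs.length_mul_simple x i with h | h
          · omega
          · exfalso
            apply hx3
            exact bruhatLE.trans cs
              (mul_le_of_lt cs (cs.isReflection_simple i) (by omega)) hx2
        have hdx : ℓ ((x * s i) * s i) < ℓ (x * s i) := by
          rwa [cs.simple_mul_simple_cancel_right]
        rw [hBmem]
        refine ⟨?_, ?_, ?_⟩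
        · -- u ≤ x * s i
          apply (le_iff_of_descent cs hdx u).mpr
          right
          rwa [cs.simple_mul_simple_cancel_right]
        · -- x * s i ≤ w
          apply (hL1 _).mpr
          right
          rwa [cs.simple_mul_simple_cancel_right]
        · exact hx3
      have hsumB : (∑ v ∈ Bset, (-1 : ℤ) ^ (ℓ v))
          = ∑ x ∈ Gset, -((-1 : ℤ) ^ (ℓ x)) := by
        apply Finset.sum_nbij' (i := fun v => v * s i) (j := fun x => x * s i)
        · exact hBG
        · exact hGB
        · intro v _
          exact cs.simple_mul_simple_cancel_right i
        · intro x _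
          exact cs.simple_mul_simple_cancel_right i
        · intro v hv
          rw [hBmem] at hv
          obtain ⟨hv1, hv2, hv3⟩ := hv
          have hvs : bruhatLE cs (v * s i) w' := by
            rcases (hL1 v).mp hv2 with h | h
            · exact absurd h hv3
            · exact h
          have hvslt : ℓ (v * s i) + 1 = ℓ v := by
            rcases cs.length_mul_simple v i with h | h
            · exfalso
              apply hv3
              exact bruhatLE.trans cs
                (le_mul_of_lt cs (cs.isReflection_simple i) (by omega)) hvs
            · omega
          rw [← hvslt, pow_succ]
          ring
      rw [hsumB, Finset.sum_neg_distrib]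
      -- split the Gset sum off the full [u*s, w'] sum
      have hsplit := Finset.sum_filter_add_sum_filter_not
        ((hfin w').toFinset.filter (fun v => bruhatLE cs (u * s i) v))
        (fun x => bruhatLE cs (x * s i) w') (fun v => (-1 : ℤ) ^ (ℓ v))
      have hGdd : (∑ x ∈ (((hfin w').toFinset.filter
            (fun v => bruhatLE cs (u * s i) v)).filter
            (fun x => bruhatLE cs (x * s i) w')), (-1 : ℤ) ^ (ℓ x)) = 0 := by
        apply Finset.sum_involution (g := fun x _ => x * s i)
        · intro x _
          exact neg_pow_cancel (cs.length_mul_simple x i)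
        · intro x _ _ hc
          exact cs.length_mul_simple_ne x i (by rw [hc])
        · intro x hx
          simp only [Finset.mem_filter, hmem] at hx ⊢
          obtain ⟨⟨hx2, hx1⟩, hx3⟩ := hx
          refine ⟨⟨hx3, ?_⟩, ?_⟩
          · -- u * s i ≤ x * s i
            rcases cs.length_mul_simple x i with h | h
            · exact bruhatLE.trans cs hx1
                (le_mul_of_lt cs (cs.isReflection_simple i) (by omega))
            · have hdx : ℓ (x * s i) < ℓ x := by omega
              rcases (le_iff_of_descent cs hdx (u * s i)).mp hx1 with h2 | h2
              · exact h2
              · rw [cs.simple_mul_simple_cancel_right] at h2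
                exact bruhatLE.trans cs huu' h2
          · rw [cs.simple_mul_simple_cancel_right]
            exact hx2
        · intro x _
          exact cs.simple_mul_simple_cancel_right i
      rw [hGdd, zero_add] at hsplit
      rw [← hGset] at hsplit
      rw [hsplit, hIH (u * s i)]
      -- final arithmetic
      by_cases huw : u = w
      · subst huw
        have h1 : ¬ (u = w') := by
          intro hc
          rw [hc] at hlw
          omega
        have h2 : u * s i = w' := hw'.symm
        rw [if_neg h1, if_pos h2, if_pos (rfl : u = u), hlw, pow_succ]
        ring
      · rw [if_neg huw]
        have h1 : ¬ (u = w') := by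
          rintro rfl
          have hws : w' * s i = w := by
            rw [hw', cs.simple_mul_simple_cancel_right]
          rw [hws] at hu
          omega
        have h2 : ¬ (u * s i = w') := by
          intro hc
          apply huw
          have := congrArg (fun x => x * s i) hc
          simpa [hw', mul_assoc, cs.simple_mul_simple_cancel_right] using this
        rw [if_neg h1, if_neg h2]
        ring

end BruhatMobius

namespace BruhatMobius
variable {B W : Type*} [Group W] {M : CoxeterMatrix B} (cs : CoxeterSystem M W)
local prefix:100 "ℓ" => cs.length
open Classical

private theorem neg_one_pow_sub {a b : ℕ} (h : b ≤ a) :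
    (-1 : ℤ) ^ (a - b) = (-1) ^ b * (-1) ^ a := by
  have h2 : a - b + 2 * b = b + a := by omega
  calc (-1 : ℤ) ^ (a - b) = (-1) ^ (a - b) * ((-1 : ℤ) ^ 2) ^ b := by norm_num
    _ = (-1) ^ (a - b + 2 * b) := by rw [← pow_mul, ← pow_add]
    _ = (-1) ^ (b + a) := by rw [h2]
    _ = (-1) ^ b * (-1) ^ a := by rw [pow_add]

end BruhatMobius


open Classical in
/-- Möbius inversion over Bruhat intervals: with I_w = Σ_{v ≤ w} (-1)^{ℓ(w)-ℓ(v)} G_v in the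
free ℤ-module with basis {G_v}, one has G_w = Σ_{v ≤ w} I_v. -/
theorem bruhat_mobius_inversion (cs : CoxeterSystem M W)
    (hfin : ∀ w : W, {v | bruhatLE cs v w}.Finite)
    (I : W → (W →₀ ℤ))
    (hI : ∀ w, I w = ∑ v ∈ (hfin w).toFinset,
      ((-1 : ℤ) ^ (cs.length w - cs.length v)) • Finsupp.single v (1 : ℤ)) :
    ∀ w : W, Finsupp.single w (1 : ℤ) = ∑ v ∈ (hfin w).toFinset, I v := by
  intro w
  have hmem : ∀ (w v : W), v ∈ (hfin w).toFinset ↔ bruhatLE cs v w := by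
    intro w v
    rw [Set.Finite.mem_toFinset]
    rfl
  ext u
  rw [Finsupp.finset_sum_apply]
  have hinner : ∀ v ∈ (hfin w).toFinset, (I v) u =
      if bruhatLE cs u v then (-1 : ℤ) ^ (cs.length v - cs.length u) else 0 := by
    intro v _
    rw [hI v, Finsupp.finset_sum_apply]
    have h1 : ∀ x ∈ (hfin v).toFinset,
        (((-1 : ℤ) ^ (cs.length v - cs.length x)) • Finsupp.single x (1 : ℤ)) u
          = if x = u then (-1 : ℤ) ^ (cs.length v - cs.length x) else 0 := by
      intro x _
      rw [Finsupp.smul_apply, Finsupp.single_apply]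
      by_cases h : x = u <;> simp [h]
    rw [Finset.sum_congr rfl h1, Finset.sum_ite_eq' (hfin v).toFinset u
      (fun x => (-1 : ℤ) ^ (cs.length v - cs.length x))]
    by_cases h : bruhatLE cs u v
    · rw [if_pos ((hmem v u).mpr h), if_pos h]
    · rw [if_neg (fun hc => h ((hmem v u).mp hc)), if_neg h]
  rw [Finset.sum_congr rfl hinner, ← Finset.sum_filter]
  have hval : ∀ v ∈ (hfin w).toFinset.filter (fun v => bruhatLE cs u v),
      (-1 : ℤ) ^ (cs.length v - cs.length u)
        = (-1 : ℤ) ^ (cs.length u) * (-1 : ℤ) ^ (cs.length v) := by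
    intro v hv
    rw [Finset.mem_filter] at hv
    exact BruhatMobius.neg_one_pow_sub (BruhatMobius.bruhatLE.length_le cs hv.2)
  rw [Finset.sum_congr rfl hval, ← Finset.mul_sum,
    BruhatMobius.mobius_aux cs hfin (cs.length w) w u rfl]
  rw [Finsupp.single_apply]
  by_cases h : u = w
  · subst h
    rw [if_pos rfl, if_pos rfl, ← pow_add]
    have : Even (cs.length u + cs.length u) := by
      exact ⟨cs.length u, by omega⟩
    rw [Even.neg_one_pow this]
  · rw [if_neg h, if_neg (fun hc => h hc.symm), mul_zero]
end
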